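/- arXiv:2401.06027 — 3 statements merged into one kernel-verified Lean document; each statement's English description precedes it below -/
import Mathlib

section
/- For any graph G, each of the ideals L_G, J_G, and ⟨[I_G]₂⟩ has saturation with respect to x_∅ equal to I_G: L_G : x_∅^∞ = J_G : x_∅^∞ = ⟨[I_G]₂⟩ : x_∅^∞ = I_G. -/
open MvPolynomial

section KempePrelim

variable {V : Type} 

/-- A proper `k`-coloring. -/
def IsColoring (G : SimpleGraph V) (k : ℕ) (f : V → Fin k) : Prop :=
  ∀ ⦃u v : V⦄, G.Adj u v → f u ≠ f v

/-- `g` is obtained from `f` by a Kempe switching: swap colors `i` and `j` on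
one connected component of the subgraph induced on `f⁻¹(i) ∪ f⁻¹(j)`. -/
def KempeSwitch (G : SimpleGraph V) {k : ℕ} (f g : V → Fin k) : Prop :=
  ∃ i j : Fin k, ∃ C : Set V,
    (∃ comp : (G.induce {v | f v = i ∨ f v = j}).ConnectedComponent,
      C = Subtype.val '' comp.supp) ∧
    (∀ v ∈ C, (f v = i → g v = j) ∧ (f v = j → g v = i)) ∧
    (∀ v ∉ C, g v = f v)

/-- A single step of Kempe equivalence between proper `k`-colorings. -/
def KempeStep (G : SimpleGraph V) {k : ℕ} (f g : V → Fin k) : Prop :=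
  IsColoring G k f ∧ IsColoring G k g ∧ KempeSwitch G f g

/-- Kempe equivalence of `k`-colorings. -/
def KempeEquiv (G : SimpleGraph V) {k : ℕ} (f g : V → Fin k) : Prop :=
  Relation.ReflTransGen (KempeStep G) f g

/-- The type of proper `k`-colorings of `G`. -/
def ProperColoring (G : SimpleGraph V) (k : ℕ) : Type _ :=
  {f : V → Fin k // IsColoring G k f}

/-- The number of Kempe classes of `k`-colorings of `G`. -/
noncomputable def Kc (G : SimpleGraph V) (k : ℕ) : ℕ :=
  Nat.card (Quot (fun f g : ProperColoring G k => KempeEquiv G f.1 g.1))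

/-- The stable (independent) sets of `G`, as a type indexing variables. -/
def StableSet (G : SimpleGraph V) : Type _ :=
  {s : Finset V // ∀ ⦃i⦄, i ∈ s → ∀ ⦃j⦄, j ∈ s → ¬ G.Adj i j}

def emptyStable (G : SimpleGraph V) : StableSet G :=
  ⟨∅, by intro i hi; simp at hi⟩

def singleStable (G : SimpleGraph V) (i : V) : StableSet G :=
  ⟨{i}, by
    intro a ha b hb
    simp only [Finset.mem_singleton] at ha hb
    rw [ha, hb]
    exact G.loopless.irrefl i⟩

def eraseStable (G : SimpleGraph V) [DecidableEq V] (S : StableSet G) (i : V) : StableSet G :=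
  ⟨S.1.erase i, fun _ ha _ hb => S.2 (Finset.mem_of_mem_erase ha) (Finset.mem_of_mem_erase hb)⟩

variable (K : Type) [Field K]

/-- The monoid algebra map `x_S ↦ t^{ρ(S)} s`, into `K[t₁,…,t_d,s]`
(realized as `MvPolynomial (Option V) K`, with `none` playing the role of `s`). -/
noncomputable def piMap (G : SimpleGraph V) :
    MvPolynomial (StableSet G) K →ₐ[K] MvPolynomial (Option V) K :=
  aeval fun S : StableSet G => (∏ i ∈ S.1, X (some i)) * X (none : Option V)

/-- The toric ideal `I_G` of the stable set ring. -/
noncomputable def toricIdeal (G : SimpleGraph V) : Ideal (MvPolynomial (StableSet G) K) :=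
  RingHom.ker (piMap K G).toRingHom

/-- The ideal `L_G`. -/
noncomputable def idealL (G : SimpleGraph V) [DecidableEq V] :
    Ideal (MvPolynomial (StableSet G) K) :=
  Ideal.span {p | ∃ (S : StableSet G) (i : V), i ∈ S.1 ∧ 2 ≤ S.1.card ∧
    p = X (eraseStable G S i) * X (singleStable G i) - X S * X (emptyStable G)}

/-- The 2-coloring ideal `J_G`. -/
noncomputable def idealJ (G : SimpleGraph V) [DecidableEq V] :
    Ideal (MvPolynomial (StableSet G) K) :=
  Ideal.span {p | ∃ S₁ S₂ S₃ S₄ : StableSet G,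
    Disjoint S₁.1 S₂.1 ∧ Disjoint S₃.1 S₄.1 ∧ S₁.1 ∪ S₂.1 = S₃.1 ∪ S₄.1 ∧
    p = X S₁ * X S₂ - X S₃ * X S₄}

/-- The ideal `⟨[I_G]₂⟩` generated by all quadratic binomials of `I_G`. -/
noncomputable def quadPart (G : SimpleGraph V) : Ideal (MvPolynomial (StableSet G) K) :=
  Ideal.span {p | (∃ S₁ S₂ S₃ S₄ : StableSet G, p = X S₁ * X S₂ - X S₃ * X S₄) ∧
    p ∈ toricIdeal K G}

/-- The monomial ideal `M_G`. -/
noncomputable def idealM (G : SimpleGraph V) [DecidableEq V] :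
    Ideal (MvPolynomial (StableSet G) K) :=
  Ideal.span {p | ∃ S T : StableSet G, (S.1 ∩ T.1).Nonempty ∧ p = X S * X T}

/-- The Kempe ideal `K_G = J_G + M_G`. -/
noncomputable def kempeIdeal (G : SimpleGraph V) [DecidableEq V] :
    Ideal (MvPolynomial (StableSet G) K) :=
  idealJ K G + idealM K G

/-- The color class of a proper coloring, as a stable set. -/
def colorClass (G : SimpleGraph V) [Fintype V] [DecidableEq V] {k : ℕ}
    (f : V → Fin k) (hf : IsColoring G k f) (c : Fin k) : StableSet G :=
  ⟨Finset.univ.filter (fun v => f v = c), by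
    intro a ha b hb hadj
    simp only [Finset.mem_filter] at ha hb
    exact hf hadj (ha.2.trans hb.2.symm)⟩

/-- The monomial `x_f` associated with a proper `k`-coloring `f`. -/
noncomputable def xMonomial (G : SimpleGraph V) [Fintype V] [DecidableEq V] {k : ℕ}
    (f : V → Fin k) (hf : IsColoring G k f) : MvPolynomial (StableSet G) K :=
  ∏ c : Fin k, X (colorClass G f hf c)

/-- The Hilbert function `k ↦ dim_K (R/I)_k` of a quotient of `R[G]`. -/
noncomputable def hilbertFn (G : SimpleGraph V)
    (I : Ideal (MvPolynomial (StableSet G) K)) (k : ℕ) : ℕ :=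
  Module.finrank K (Submodule.map (Ideal.Quotient.mkₐ K I).toLinearMap
    (homogeneousSubmodule (StableSet G) K k))

end KempePrelim


section SaturationAux

variable {d : ℕ} (G : SimpleGraph (Fin d)) (K : Type) [Field K]

lemma piMap_X (S : StableSet G) :
    piMap K G (X S) = (∏ i ∈ S.1, X (some i)) * X (none : Option (Fin d)) :=
  aeval_X _ S

lemma piMap_X_empty : piMap K G (X (emptyStable G)) = X (none : Option (Fin d)) := by
  rw [piMap_X]
  have : (emptyStable G).1 = ∅ := rfl
  rw [this, Finset.prod_empty, one_mul]

lemma piMap_X_single (i : Fin d) :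
    piMap K G (X (singleStable G i)) = X (some i) * X (none : Option (Fin d)) := by
  rw [piMap_X]
  have : (singleStable G i).1 = {i} := rfl
  rw [this, Finset.prod_singleton]

lemma idealL_le_toric : idealL K G ≤ toricIdeal K G := by
  rw [idealL, Ideal.span_le]
  rintro p ⟨S, i, hi, hcard, rfl⟩
  simp only [SetLike.mem_coe, toricIdeal, RingHom.mem_ker, AlgHom.toRingHom_eq_coe,
    RingHom.coe_coe]
  rw [map_sub, map_mul, map_mul, piMap_X_single, piMap_X_empty, piMap_X, piMap_X]
  have hE : (eraseStable G S i).1 = S.1.erase i := rfl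
  rw [hE, sub_eq_zero, ← Finset.prod_erase_mul S.1 _ hi]
  ring

lemma idealJ_le_toric : idealJ K G ≤ toricIdeal K G := by
  rw [idealJ, Ideal.span_le]
  rintro p ⟨S₁, S₂, S₃, S₄, h12, h34, hu, rfl⟩
  simp only [SetLike.mem_coe, toricIdeal, RingHom.mem_ker, AlgHom.toRingHom_eq_coe,
    RingHom.coe_coe]
  rw [map_sub, map_mul, map_mul, piMap_X, piMap_X, piMap_X, piMap_X, sub_eq_zero,
    mul_mul_mul_comm, ← Finset.prod_union h12, hu, Finset.prod_union h34, mul_mul_mul_comm]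

lemma quadPart_le_toric : quadPart K G ≤ toricIdeal K G := by
  rw [quadPart, Ideal.span_le]
  rintro p ⟨-, hp⟩
  exact hp

lemma idealL_le_idealJ : idealL K G ≤ idealJ K G := by
  rw [idealL, Ideal.span_le]
  rintro p ⟨S, i, hi, hcard, rfl⟩
  refine Ideal.subset_span ⟨eraseStable G S i, singleStable G i, S, emptyStable G, ?_, ?_, ?_, rfl⟩
  · have hE : (eraseStable G S i).1 = S.1.erase i := rfl
    have hS : (singleStable G i).1 = {i} := rfl
    rw [hE, hS, Finset.disjoint_singleton_right]
    exact Finset.notMem_erase i S.1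
  · have hE : (emptyStable G).1 = ∅ := rfl
    rw [hE]
    exact Finset.disjoint_empty_right _
  · have hE : (eraseStable G S i).1 = S.1.erase i := rfl
    have hS : (singleStable G i).1 = {i} := rfl
    have hEm : (emptyStable G).1 = ∅ := rfl
    rw [hE, hS, hEm, Finset.union_empty, Finset.union_comm]
    ext a
    simp only [Finset.mem_union, Finset.mem_singleton, Finset.mem_erase]
    constructor
    · rintro (rfl | ⟨-, h⟩)
      · exact hi
      · exact h
    · intro h
      by_cases hai : a = i
      · exact Or.inl hai
      · exact Or.inr ⟨hai, h⟩

lemma idealJ_le_quadPart : idealJ K G ≤ quadPart K G := by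
  rw [idealJ, Ideal.span_le]
  rintro p hp
  refine Ideal.subset_span ⟨?_, idealJ_le_toric G K (Ideal.subset_span hp)⟩
  obtain ⟨S₁, S₂, S₃, S₄, -, -, -, rfl⟩ := hp
  exact ⟨S₁, S₂, S₃, S₄, rfl⟩

/-- Inclusion of the subalgebra generated by singleton and empty stable-set variables. -/
noncomputable def iotaMap : MvPolynomial (Option (Fin d)) K →ₐ[K] MvPolynomial (StableSet G) K :=
  aeval fun o => match o with
    | none => X (emptyStable G)
    | some i => X (singleStable G i)

lemma iotaMap_none : iotaMap G K (X none) = X (emptyStable G) := aeval_X _ none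

lemma iotaMap_some (i : Fin d) : iotaMap G K (X (some i)) = X (singleStable G i) :=
  aeval_X _ (some i)

lemma pi_iota_inj : Function.Injective fun r => piMap K G (iotaMap G K r) := by
  set A := MvPolynomial (Option (Fin d)) K with hA
  set F := FractionRing A with hF
  have hinj : Function.Injective (algebraMap A F) := IsFractionRing.injective A F
  have hXnone : (algebraMap A F) (X none) ≠ 0 := by
    rw [map_ne_zero_iff _ hinj]
    exact X_ne_zero _
  set f : Option (Fin d) → F := fun o => Option.elim o (algebraMap A F (X none))
    (fun i => algebraMap A F (X (some i)) * (algebraMap A F (X none))⁻¹) with hf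
  set g : A →+* F := eval₂Hom ((algebraMap A F).comp (C : K →+* A)) f with hg
  have hcomp : g.comp (((piMap K G).toRingHom).comp ((iotaMap G K).toRingHom))
      = algebraMap A F := by
    apply MvPolynomial.ringHom_ext
    · intro k
      rw [RingHom.comp_apply]
      have h1 : (((piMap K G).toRingHom).comp ((iotaMap G K).toRingHom)) (C k)
          = C k := by
        simp [iotaMap, piMap]
      rw [h1, hg]
      exact eval₂Hom_C _ _ _
    · intro o
      rw [RingHom.comp_apply, RingHom.comp_apply]
      cases o with
      | none =>
        have h1 : ((iotaMap G K).toRingHom) (X none) = X (emptyStable G) := iotaMap_none G K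
        have h2 : ((piMap K G).toRingHom) (X (emptyStable G)) = X none := piMap_X_empty G K
        rw [h1, h2, hg, eval₂Hom_X', hf]
        simp
      | some i =>
        have h1 : ((iotaMap G K).toRingHom) (X (some i)) = X (singleStable G i) :=
          iotaMap_some G K i
        have h2 : ((piMap K G).toRingHom) (X (singleStable G i))
            = X (some i) * X none := piMap_X_single G K i
        rw [h1, h2, map_mul, hg, eval₂Hom_X', eval₂Hom_X', hf]
        simp only [Option.elim_some, Option.elim_none]
        rw [mul_assoc, inv_mul_cancel₀ hXnone, mul_one]
  have key : ∀ r : A, g (piMap K G (iotaMap G K r)) = algebraMap A F r := fun r =>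
    RingHom.congr_fun hcomp r
  intro x y h
  apply hinj
  rw [← key x, ← key y]
  exact congrArg g h

lemma normal_form (S : StableSet G) :
    Ideal.Quotient.mk (idealL K G) (X S * X (emptyStable G) ^ S.1.card)
      = Ideal.Quotient.mk (idealL K G) (X (emptyStable G) * ∏ i ∈ S.1, X (singleStable G i)) := by
  suffices h : ∀ (n : ℕ) (S : StableSet G), S.1.card = n →
      Ideal.Quotient.mk (idealL K G) (X S * X (emptyStable G) ^ S.1.card)
        = Ideal.Quotient.mk (idealL K G)
            (X (emptyStable G) * ∏ i ∈ S.1, X (singleStable G i)) from h _ S rfl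
  intro n
  induction n with
  | zero =>
    intro S hn
    have hS : S.1 = ∅ := Finset.card_eq_zero.mp hn
    have : S = emptyStable G := Subtype.ext hS
    subst this
    simp [hS]
  | succ n ih =>
    intro S hn
    rcases Nat.eq_zero_or_pos n with rfl | hpos
    · obtain ⟨i, hi⟩ := Finset.card_eq_one.mp hn
      have : S = singleStable G i := Subtype.ext hi
      subst this
      rw [hi]
      simp [mul_comm]
    · have hne : S.1.Nonempty := Finset.card_pos.mp (by omega)
      obtain ⟨i, hi⟩ := hne
      have hgen : X (eraseStable G S i) * X (singleStable G i) - X S * X (emptyStable G)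
          ∈ idealL K G :=
        Ideal.subset_span ⟨S, i, hi, by omega, rfl⟩
      have h1 : Ideal.Quotient.mk (idealL K G) (X S * X (emptyStable G))
          = Ideal.Quotient.mk (idealL K G)
            (X (eraseStable G S i) * X (singleStable G i)) := by
        rw [Ideal.Quotient.eq]
        have := neg_mem hgen
        rw [neg_sub] at this
        exact this
      have hEcard : (eraseStable G S i).1.card = n := by
        have : (eraseStable G S i).1 = S.1.erase i := rfl
        rw [this, Finset.card_erase_of_mem hi, hn]
        omega
      have h2 := ih (eraseStable G S i) hEcard
      rw [hEcard] at h2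
      have hprod : (X (singleStable G i) : MvPolynomial (StableSet G) K) *
          ∏ j ∈ (eraseStable G S i).1, X (singleStable G j)
          = ∏ j ∈ S.1, X (singleStable G j) := by
        have hE : (eraseStable G S i).1 = S.1.erase i := rfl
        rw [hE]
        exact Finset.mul_prod_erase S.1 (fun j => X (singleStable G j)) hi
      rw [hn]
      calc Ideal.Quotient.mk (idealL K G) (X S * X (emptyStable G) ^ (n + 1))
          = Ideal.Quotient.mk (idealL K G) (X S * X (emptyStable G))
            * Ideal.Quotient.mk (idealL K G) (X (emptyStable G) ^ n) := by
            rw [← map_mul]; ring_nf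
        _ = Ideal.Quotient.mk (idealL K G)
              (X (eraseStable G S i) * X (singleStable G i))
            * Ideal.Quotient.mk (idealL K G) (X (emptyStable G) ^ n) := by rw [h1]
        _ = Ideal.Quotient.mk (idealL K G) (X (singleStable G i))
            * Ideal.Quotient.mk (idealL K G)
              (X (eraseStable G S i) * X (emptyStable G) ^ n) := by
            rw [← map_mul, ← map_mul]; ring_nf
        _ = Ideal.Quotient.mk (idealL K G) (X (singleStable G i))
            * Ideal.Quotient.mk (idealL K G)
              (X (emptyStable G) * ∏ j ∈ (eraseStable G S i).1, X (singleStable G j)) := by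
            rw [h2]
        _ = Ideal.Quotient.mk (idealL K G)
              (X (emptyStable G) * ∏ j ∈ S.1, X (singleStable G j)) := by
            rw [← map_mul, ← hprod]; ring_nf

lemma exists_normal (p : MvPolynomial (StableSet G) K) :
    ∃ (N : ℕ) (r : MvPolynomial (Option (Fin d)) K),
      Ideal.Quotient.mk (idealL K G) (X (emptyStable G) ^ N * p)
        = Ideal.Quotient.mk (idealL K G) (iotaMap G K r) := by
  induction p using MvPolynomial.induction_on' with
  | monomial a c =>
    refine ⟨∑ S ∈ a.support, a S * S.1.card,
      C c * ∏ S ∈ a.support, (X none * ∏ i ∈ S.1, X (some i)) ^ a S, ?_⟩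
    have hmon : (monomial a c : MvPolynomial (StableSet G) K)
        = C c * ∏ S ∈ a.support, X S ^ a S := by
      rw [monomial_eq]
      rfl
    have hpow : (X (emptyStable G) : MvPolynomial (StableSet G) K)
          ^ (∑ S ∈ a.support, a S * S.1.card)
        = ∏ S ∈ a.support, (X (emptyStable G) ^ S.1.card) ^ a S := by
      rw [← Finset.prod_pow_eq_pow_sum]
      refine Finset.prod_congr rfl fun S _ => ?_
      rw [← pow_mul, Nat.mul_comm]
    have hiota : iotaMap G K (C c * ∏ S ∈ a.support, (X none * ∏ i ∈ S.1, X (some i)) ^ a S)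
        = C c * ∏ S ∈ a.support,
            (X (emptyStable G) * ∏ i ∈ S.1, X (singleStable G i)) ^ a S := by
      rw [map_mul, map_prod]
      congr 1
      · simp [iotaMap, algebraMap_eq]
      · refine Finset.prod_congr rfl fun S _ => ?_
        rw [map_pow, map_mul, map_prod, iotaMap_none]
        congr 1
        refine congrArg _ (Finset.prod_congr rfl fun i _ => iotaMap_some G K i)
    rw [hmon, hiota, hpow]
    rw [mul_left_comm, ← Finset.prod_mul_distrib]
    simp only [← mul_pow]
    rw [map_mul, map_mul, map_prod, map_prod]
    congr 1
    refine Finset.prod_congr rfl fun S _ => ?_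
    rw [map_pow, map_pow]
    congr 1
    rw [mul_comm (X (emptyStable G) ^ S.1.card)]
    exact normal_form G K S
  | add p q ihp ihq =>
    obtain ⟨N₁, r₁, h₁⟩ := ihp
    obtain ⟨N₂, r₂, h₂⟩ := ihq
    refine ⟨max N₁ N₂, X none ^ (max N₁ N₂ - N₁) * r₁ + X none ^ (max N₁ N₂ - N₂) * r₂, ?_⟩
    have e1 : (X (emptyStable G) : MvPolynomial (StableSet G) K) ^ max N₁ N₂ * p
        = X (emptyStable G) ^ (max N₁ N₂ - N₁) * (X (emptyStable G) ^ N₁ * p) := by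
      rw [← mul_assoc, ← pow_add, Nat.sub_add_cancel (Nat.le_max_left N₁ N₂)]
    have e2 : (X (emptyStable G) : MvPolynomial (StableSet G) K) ^ max N₁ N₂ * q
        = X (emptyStable G) ^ (max N₁ N₂ - N₂) * (X (emptyStable G) ^ N₂ * q) := by
      rw [← mul_assoc, ← pow_add, Nat.sub_add_cancel (Nat.le_max_right N₁ N₂)]
    have t1 : Ideal.Quotient.mk (idealL K G)
          (X (emptyStable G) ^ (max N₁ N₂ - N₁) * (X (emptyStable G) ^ N₁ * p))
        = Ideal.Quotient.mk (idealL K G) (iotaMap G K (X none ^ (max N₁ N₂ - N₁) * r₁)) := by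
      have hh : iotaMap G K (X none ^ (max N₁ N₂ - N₁) * r₁)
          = X (emptyStable G) ^ (max N₁ N₂ - N₁) * iotaMap G K r₁ := by
        rw [map_mul, map_pow, iotaMap_none]
      rw [hh, map_mul, h₁, map_mul]
    have t2 : Ideal.Quotient.mk (idealL K G)
          (X (emptyStable G) ^ (max N₁ N₂ - N₂) * (X (emptyStable G) ^ N₂ * q))
        = Ideal.Quotient.mk (idealL K G) (iotaMap G K (X none ^ (max N₁ N₂ - N₂) * r₂)) := by
      have hh : iotaMap G K (X none ^ (max N₁ N₂ - N₂) * r₂)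
          = X (emptyStable G) ^ (max N₁ N₂ - N₂) * iotaMap G K r₂ := by
        rw [map_mul, map_pow, iotaMap_none]
      rw [hh, map_mul, h₂, map_mul]
    rw [mul_add, map_add, e1, e2, t1, t2, map_add (iotaMap G K), map_add]

lemma mem_toric_iff (p : MvPolynomial (StableSet G) K) :
    p ∈ toricIdeal K G ↔ piMap K G p = 0 := by
  rw [toricIdeal, RingHom.mem_ker]
  rfl

lemma toric_sat (p : MvPolynomial (StableSet G) K) (hp : p ∈ toricIdeal K G) :
    ∃ n : ℕ, 0 < n ∧ X (emptyStable G) ^ n * p ∈ idealL K G := by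
  obtain ⟨N, r, hr⟩ := exists_normal G K p
  have hL : X (emptyStable G) ^ N * p - iotaMap G K r ∈ idealL K G :=
    (Ideal.Quotient.eq).mp hr
  have hpi : piMap K G (iotaMap G K r) = 0 := by
    have h1 : piMap K G (X (emptyStable G) ^ N * p - iotaMap G K r) = 0 :=
      (mem_toric_iff G K _).mp (idealL_le_toric G K hL)
    rw [map_sub, map_mul, (mem_toric_iff G K p).mp hp, mul_zero, zero_sub, neg_eq_zero] at h1
    exact h1
  have hr0 : r = 0 := by
    apply pi_iota_inj G K
    simp only [hpi, map_zero]
  rw [hr0, map_zero, sub_zero] at hL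
  refine ⟨N + 1, Nat.succ_pos _, ?_⟩
  have : X (emptyStable G) ^ (N + 1) * p = X (emptyStable G) * (X (emptyStable G) ^ N * p) := by
    ring
  rw [this]
  exact Ideal.mul_mem_left _ _ hL

lemma sat_back {I : Ideal (MvPolynomial (StableSet G) K)} (hI : I ≤ toricIdeal K G)
    (p : MvPolynomial (StableSet G) K)
    (h : ∃ n : ℕ, 0 < n ∧ X (emptyStable G) ^ n * p ∈ I) : p ∈ toricIdeal K G := by
  obtain ⟨n, -, hn⟩ := h
  have h0 := (mem_toric_iff G K _).mp (hI hn)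
  rw [map_mul, map_pow, piMap_X_empty] at h0
  rw [mem_toric_iff]
  rcases mul_eq_zero.mp h0 with h | h
  · exact absurd h (pow_ne_zero _ (X_ne_zero _))
  · exact h

end SaturationAux

theorem saturations_eq_toricIdeal {d : ℕ} (G : SimpleGraph (Fin d))
    (K : Type) [Field K] :
    (∀ p : MvPolynomial (StableSet G) K,
      (∃ n : ℕ, 0 < n ∧ X (emptyStable G) ^ n * p ∈ idealL K G) ↔ p ∈ toricIdeal K G) ∧
    (∀ p : MvPolynomial (StableSet G) K,
      (∃ n : ℕ, 0 < n ∧ X (emptyStable G) ^ n * p ∈ idealJ K G) ↔ p ∈ toricIdeal K G) ∧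
    (∀ p : MvPolynomial (StableSet G) K,
      (∃ n : ℕ, 0 < n ∧ X (emptyStable G) ^ n * p ∈ quadPart K G) ↔ p ∈ toricIdeal K G) := by
  refine ⟨fun p => ⟨sat_back G K (idealL_le_toric G K) p, fun hp => toric_sat G K p hp⟩,
    fun p => ⟨sat_back G K (idealJ_le_toric G K) p, fun hp => ?_⟩,
    fun p => ⟨sat_back G K (quadPart_le_toric G K) p, fun hp => ?_⟩⟩
  · obtain ⟨n, hn, hmem⟩ := toric_sat G K p hp
    exact ⟨n, hn, idealL_le_idealJ G K hmem⟩
  · obtain ⟨n, hn, hmem⟩ := toric_sat G K p hp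
    exact ⟨n, hn, idealJ_le_quadPart G K (idealL_le_idealJ G K hmem)⟩
end

section
/- Two k-colorings f and g of a graph G are Kempe equivalent if and only if the binomial x_f − x_g belongs to the 2-coloring ideal J_G. -/
open MvPolynomial

section KempeProof

open Finset

variable {d k : ℕ}

instance {V : Type} [DecidableEq V] (G : SimpleGraph V) : DecidableEq (StableSet G) := by
  unfold StableSet; infer_instance

lemma mem_colorClass (G : SimpleGraph (Fin d)) {f : Fin d → Fin k}
    (hf : IsColoring G k f) (c : Fin k) (v : Fin d) :
    v ∈ (colorClass G f hf c).1 ↔ f v = c := by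
  simp [colorClass]

/-- exponent vector of the coloring monomial -/
noncomputable def expv (G : SimpleGraph (Fin d)) (f : Fin d → Fin k)
    (hf : IsColoring G k f) : StableSet G →₀ ℕ :=
  ∑ c : Fin k, Finsupp.single (colorClass G f hf c) 1

lemma prod_X_eq_monomial {σ R : Type*} [CommSemiring R] {ι : Type*} (s : Finset ι)
    (F : ι → σ) :
    (∏ c ∈ s, (X (F c) : MvPolynomial σ R)) =
      monomial (∑ c ∈ s, Finsupp.single (F c) 1) 1 := by
  classical
  induction s using Finset.induction_on with
  | empty => simp [monomial_zero']
  | insert _ _ h ih =>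
      rw [Finset.prod_insert h, Finset.sum_insert h, ih, X, monomial_mul, one_mul]

lemma xMonomial_eq (K : Type) [Field K] (G : SimpleGraph (Fin d)) (f : Fin d → Fin k)
    (hf : IsColoring G k f) :
    xMonomial K G f hf = monomial (expv G f hf) 1 := by
  rw [xMonomial, expv, prod_X_eq_monomial]

lemma expv_apply (G : SimpleGraph (Fin d)) (f : Fin d → Fin k)
    (hf : IsColoring G k f) (S : StableSet G) :
    expv G f hf S = (univ.filter (fun c => colorClass G f hf c = S)).card := by
  rw [expv, Finsupp.finset_sum_apply, Finset.card_filter]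
  exact Finset.sum_congr rfl fun c _ => by rw [Finsupp.single_apply]

end KempeProof

section KempeSymm

variable {V : Type} {k : ℕ}

lemma kempeStep_symm (G : SimpleGraph V) {a b : V → Fin k} (h : KempeStep G a b) :
    KempeStep G b a := by
  obtain ⟨ha, hb, i, j, C, ⟨comp, hC⟩, hsw, hout⟩ := h
  refine ⟨hb, ha, i, j, C, ?_, ?_, ?_⟩
  · have hmemC : ∀ v ∈ C, a v = i ∨ a v = j := by
      intro v hv; rw [hC] at hv; obtain ⟨u, _, rfl⟩ := hv; exact u.2
    have hbv : ∀ v ∈ C, b v = i ∨ b v = j := by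
      intro v hv
      rcases hmemC v hv with h1 | h1
      · exact Or.inr ((hsw v hv).1 h1)
      · exact Or.inl ((hsw v hv).2 h1)
    have hset : {v | a v = i ∨ a v = j} = {v | b v = i ∨ b v = j} := by
      ext v
      by_cases hv : v ∈ C
      · simp only [Set.mem_setOf_eq]
        exact ⟨fun _ => hbv v hv, fun _ => hmemC v hv⟩
      · simp only [Set.mem_setOf_eq, hout v hv]
    rw [← hset]
    exact ⟨comp, hC⟩
  · intro v hv
    have hav : a v = i ∨ a v = j := by
      rw [hC] at hv; obtain ⟨u, _, rfl⟩ := hv; exact u.2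
    constructor
    · intro hbi
      rcases hav with h1 | h1
      · exact h1.trans (((hsw v hv).1 h1).symm.trans hbi).symm
      · exact h1
    · intro hbj
      rcases hav with h1 | h1
      · exact h1
      · exact h1.trans (((hsw v hv).2 h1).symm.trans hbj).symm
  · intro v hv; exact (hout v hv).symm

lemma kempeEquiv_symm (G : SimpleGraph V) {a b : V → Fin k} (h : KempeEquiv G a b) :
    KempeEquiv G b a :=
  by haveI : Std.Symm (KempeStep G (k := k)) := ⟨fun _ _ hs => kempeStep_symm G hs⟩
     exact Std.Symm.symm (r := Relation.ReflTransGen (KempeStep G)) _ _ h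

lemma kempeEquiv_trans (G : SimpleGraph V) {a b c : V → Fin k} (h : KempeEquiv G a b)
    (h' : KempeEquiv G b c) : KempeEquiv G a c :=
  Relation.ReflTransGen.trans h h'

end KempeSymm

section TwoColor

variable {d k : ℕ}

lemma uniq2 {c1 c2 : Fin k} (x y z : Fin k) (hx : x = c1 ∨ x = c2) (hy : y = c1 ∨ y = c2)
    (hz : z = c1 ∨ z = c2) (hxy : x ≠ y) (hxz : x ≠ z) : y = z := by
  rcases hx with rfl | rfl <;> rcases hy with rfl | rfl <;> rcases hz with rfl | rfl <;> simp_all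

lemma eq_swap_of_ne {c1 c2 : Fin k} (x y : Fin k) (hx : x = c1 ∨ x = c2)
    (hy : y = c1 ∨ y = c2) (hxy : x ≠ y) : y = Equiv.swap c1 c2 x := by
  rcases hx with rfl | rfl <;> rcases hy with rfl | rfl <;> simp_all

lemma twoColorSwap (G : SimpleGraph (Fin d)) {c1 c2 : Fin k} (hcc : c1 ≠ c2)
    {h h' : Fin d → Fin k} (hh : IsColoring G k h) (hh' : IsColoring G k h')
    (hfix : ∀ v, ¬(h v = c1 ∨ h v = c2) → h' v = h v)
    (hkeep : ∀ v, (h v = c1 ∨ h v = c2) → (h' v = c1 ∨ h' v = c2)) :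
    KempeEquiv G h h' := by
  classical
  set W : Set (Fin d) := {v | h v = c1 ∨ h v = c2} with hW
  set H := G.induce W with hH
  -- the recoloring swapping components in D
  set recol : Set H.ConnectedComponent → Fin d → Fin k := fun D v =>
    if hv : v ∈ W then
      (if H.connectedComponentMk ⟨v, hv⟩ ∈ D then Equiv.swap c1 c2 (h v) else h v)
    else h v with hrecol
  have hWc : ∀ v ∈ W, h v = c1 ∨ h v = c2 := fun v hv => hv
  have hswapc : ∀ x : Fin k, (x = c1 ∨ x = c2) →
      (Equiv.swap c1 c2 x = c1 ∨ Equiv.swap c1 c2 x = c2) := by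
    rintro x (rfl | rfl) <;> simp
  have hrange : ∀ D v, ((recol D v = c1 ∨ recol D v = c2) ↔ v ∈ W) := by
    intro D v
    by_cases hv : v ∈ W
    · simp only [hrecol, dif_pos hv]
      refine iff_of_true ?_ hv
      by_cases hd : H.connectedComponentMk ⟨v, hv⟩ ∈ D
      · rw [if_pos hd]; exact hswapc _ (hWc v hv)
      · rw [if_neg hd]; exact hWc v hv
    · simp only [hrecol, dif_neg hv]
      exact iff_of_false hv hv
  have hadjH : ∀ (u v : Fin d) (hu : u ∈ W) (hv : v ∈ W), G.Adj u v →
      H.connectedComponentMk ⟨u, hu⟩ = H.connectedComponentMk ⟨v, hv⟩ := by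
    intro u v hu hv huv
    exact SimpleGraph.ConnectedComponent.sound
      (SimpleGraph.Adj.reachable (by simpa [hH] using huv))
  have hproper : ∀ D, IsColoring G k (recol D) := by
    intro D u v huv
    by_cases hu : u ∈ W <;> by_cases hv : v ∈ W
    · have hcomp := hadjH u v hu hv huv
      simp only [hrecol, dif_pos hu, dif_pos hv, hcomp]
      by_cases hd : H.connectedComponentMk ⟨v, hv⟩ ∈ D
      · rw [if_pos hd, if_pos hd]
        exact fun he => hh huv (Equiv.injective _ he)
      · rw [if_neg hd, if_neg hd]; exact hh huv
    · intro he
      exact hv ((hrange D v).1 (he ▸ (hrange D u).2 hu))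
    · intro he
      exact hu ((hrange D u).1 (he.symm ▸ (hrange D v).2 hv))
    · simp only [hrecol, dif_neg hu, dif_neg hv]; exact hh huv
  -- all-or-nothing on components
  have hedge : ∀ (u v : ↥W), H.Adj u v → (h' u.1 = h u.1 → h' v.1 = h v.1) := by
    intro u v huv he
    have hGuv : G.Adj u.1 v.1 := by simpa [hH] using huv
    exact uniq2 (h' u.1) (h' v.1) (h v.1) (hkeep u.1 u.2) (hkeep v.1 v.2) (hWc v.1 v.2)
      (hh' hGuv) (he ▸ hh hGuv)
  have hAoNw : ∀ (u v : ↥W) (p : H.Walk u v), (h' u.1 = h u.1 ↔ h' v.1 = h v.1) := by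
    intro u v p
    induction p with
    | nil => exact Iff.rfl
    | cons ha p ih =>
        exact ⟨fun he => ih.1 (hedge _ _ ha he), fun he => hedge _ _ ha.symm (ih.2 he)⟩
  have hAoN : ∀ (u v : ↥W), H.connectedComponentMk u = H.connectedComponentMk v →
      (h' u.1 = h u.1 ↔ h' v.1 = h v.1) := by
    intro u v hcomp
    exact ((SimpleGraph.ConnectedComponent.eq).1 hcomp).elim fun p => hAoNw u v p
  set Dfull : Set H.ConnectedComponent :=
    {comp | ∃ u : ↥W, H.connectedComponentMk u = comp ∧ h' u.1 ≠ h u.1} with hDfull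
  have hfull : recol Dfull = h' := by
    funext v
    by_cases hv : v ∈ W
    · by_cases hd : H.connectedComponentMk ⟨v, hv⟩ ∈ Dfull
      · obtain ⟨u, hu, hneq⟩ := Set.mem_setOf_eq ▸ hd
        have : h' v ≠ h v := fun he => hneq ((hAoN u ⟨v, hv⟩ hu).2 he)
        have he' : h' v = Equiv.swap c1 c2 (h v) :=
          eq_swap_of_ne _ _ (hWc v hv) (hkeep v hv) (Ne.symm this)
        simp only [hrecol, dif_pos hv, if_pos hd]
        exact he'.symm
      · have : h' v = h v := by
          by_contra hne
          exact hd ⟨⟨v, hv⟩, rfl, hne⟩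
        simp only [hrecol, dif_pos hv, if_neg hd]
        exact this.symm
    · simp only [hrecol, dif_neg hv]
      exact (hfix v hv).symm
  have hstep : ∀ (D : Set H.ConnectedComponent) (comp : H.ConnectedComponent),
      comp ∉ D → KempeStep G (recol D) (recol (insert comp D)) := by
    intro D comp hcomp
    refine ⟨hproper D, hproper (insert comp D), c1, c2, Subtype.val '' comp.supp, ?_, ?_, ?_⟩
    · have hset : {v | recol D v = c1 ∨ recol D v = c2} = W := Set.ext fun v => hrange D v
      rw [hset]
      exact ⟨comp, rfl⟩
    · rintro v ⟨u, hu, rfl⟩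
      have hmk : H.connectedComponentMk u = comp :=
        (SimpleGraph.ConnectedComponent.mem_supp_iff comp u).1 hu
      have hu2 : (u : Fin d) ∈ W := u.2
      have hself : (⟨(u : Fin d), hu2⟩ : ↥W) = u := rfl
      have hD : recol D u.1 = h u.1 := by
        simp only [hrecol, dif_pos hu2, hself, hmk, if_neg hcomp]
      have hD' : recol (insert comp D) u.1 = Equiv.swap c1 c2 (h u.1) := by
        simp only [hrecol, dif_pos hu2, hself, hmk, if_pos (Set.mem_insert comp D)]
      rw [hD, hD']
      constructor
      · intro h1; rw [h1]; simp
      · intro h1; rw [h1]; simp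
    · intro v hv
      by_cases hvW : v ∈ W
      · have hmk : H.connectedComponentMk ⟨v, hvW⟩ ≠ comp := by
          intro he
          exact hv ⟨⟨v, hvW⟩, (SimpleGraph.ConnectedComponent.mem_supp_iff comp _).2 he, rfl⟩
        have : (H.connectedComponentMk ⟨v, hvW⟩ ∈ insert comp D) ↔
            (H.connectedComponentMk ⟨v, hvW⟩ ∈ D) := by
          simp [Set.mem_insert_iff, hmk]
        simp only [hrecol, dif_pos hvW, this]
      · simp only [hrecol, dif_neg hvW]
  have hind : ∀ (D : Set H.ConnectedComponent), KempeEquiv G h (recol D) := by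
    intro D
    refine Set.Finite.induction_on (motive := fun D _ => KempeEquiv G h (recol D)) D
      (Set.toFinite D) ?_ ?_
    · have he : recol ∅ = h := by
        funext v
        by_cases hv : v ∈ W <;> simp [hrecol, hv]
      show KempeEquiv G h (recol ∅)
      rw [he]
      exact Relation.ReflTransGen.refl
    · intro a s ha _ ih
      exact Relation.ReflTransGen.tail ih (hstep _ _ ha)
  rw [← hfull]
  exact hind Dfull

end TwoColor

section Perm

variable {d k : ℕ}

lemma isColoring_comp_swap (G : SimpleGraph (Fin d)) {c0 c1 : Fin k} {h : Fin d → Fin k}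
    (hh : IsColoring G k h) : IsColoring G k (Equiv.swap c0 c1 ∘ h) :=
  fun _ _ huv he => hh huv ((Equiv.swap c0 c1).injective he)

lemma kempe_swap (G : SimpleGraph (Fin d)) {c0 c1 : Fin k} (hne : c0 ≠ c1)
    {h : Fin d → Fin k} (hh : IsColoring G k h) :
    KempeEquiv G h (Equiv.swap c0 c1 ∘ h) := by
  refine twoColorSwap G hne hh (isColoring_comp_swap G hh) ?_ ?_
  · intro v hv
    push_neg at hv
    exact Equiv.swap_apply_of_ne_of_ne hv.1 hv.2
  · rintro v (hv | hv) <;> simp [Function.comp, hv]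

lemma colorClass_swap (G : SimpleGraph (Fin d)) {c0 c1 : Fin k} {h : Fin d → Fin k}
    (hh : IsColoring G k h) (hh₁ : IsColoring G k (Equiv.swap c0 c1 ∘ h)) (c : Fin k) :
    colorClass G (Equiv.swap c0 c1 ∘ h) hh₁ c = colorClass G h hh (Equiv.swap c0 c1 c) := by
  apply Subtype.ext
  ext v
  rw [mem_colorClass, mem_colorClass]
  show Equiv.swap c0 c1 (h v) = c ↔ _
  rw [← Equiv.symm_swap, Equiv.symm_apply_eq, Equiv.symm_swap]

lemma expv_swap (G : SimpleGraph (Fin d)) {c0 c1 : Fin k} {h : Fin d → Fin k}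
    (hh : IsColoring G k h) (hh₁ : IsColoring G k (Equiv.swap c0 c1 ∘ h)) :
    expv G (Equiv.swap c0 c1 ∘ h) hh₁ = expv G h hh := by
  rw [expv, expv]
  rw [← Equiv.sum_comp (Equiv.swap c0 c1)
    (fun c => Finsupp.single (colorClass G h hh c) 1)]
  exact Finset.sum_congr rfl fun c _ => by rw [colorClass_swap G hh hh₁]

lemma kempe_of_expv_eq_aux (G : SimpleGraph (Fin d)) :
    ∀ (n : ℕ) (h g : Fin d → Fin k) (hh : IsColoring G k h) (hg : IsColoring G k g),
      (Finset.univ.filter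
        (fun c => colorClass G h hh c ≠ colorClass G g hg c)).card = n →
      expv G h hh = expv G g hg → KempeEquiv G h g := by
  intro n
  induction n using Nat.strong_induction_on with
  | _ n ih =>
    intro h g hh hg hcard he
    by_cases h0 : ∀ c, colorClass G h hh c = colorClass G g hg c
    · have : h = g := by
        funext v
        have h1 : v ∈ (colorClass G h hh (h v)).1 := (mem_colorClass G hh _ v).2 rfl
        rw [h0] at h1
        exact ((mem_colorClass G hg _ v).1 h1).symm
      rw [this]
      exact Relation.ReflTransGen.refl
    · push_neg at h0
      obtain ⟨c0, hc0⟩ := h0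
      set S := colorClass G g hg c0 with hS
      set A := Finset.univ.filter (fun c => colorClass G h hh c = S) with hA
      set B := Finset.univ.filter (fun c => colorClass G g hg c = S) with hB
      have hABcard : A.card = B.card := by
        rw [hA, hB, ← expv_apply, ← expv_apply, he]
      have hc0B : c0 ∈ B := Finset.mem_filter.2 ⟨Finset.mem_univ _, rfl⟩
      have hc0A : c0 ∉ A := fun hc => hc0 (Finset.mem_filter.1 hc).2
      have hsub : ¬ A ⊆ B := by
        intro hsub
        have : A = B := Finset.eq_of_subset_of_card_le hsub (le_of_eq hABcard.symm)
        rw [this] at hc0A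
        exact hc0A hc0B
      obtain ⟨c1, hc1A, hc1B⟩ := Finset.not_subset.1 hsub
      have hc1S : colorClass G h hh c1 = S := (Finset.mem_filter.1 hc1A).2
      have hc1gS : colorClass G g hg c1 ≠ S := fun hc =>
        hc1B (Finset.mem_filter.2 ⟨Finset.mem_univ _, hc⟩)
      have hne : c0 ≠ c1 := fun hc => hc0A (hc ▸ hc1A)
      set h₁ := Equiv.swap c0 c1 ∘ h with hh₁def
      have hh₁ : IsColoring G k h₁ := isColoring_comp_swap G hh
      have hcls : ∀ c, colorClass G h₁ hh₁ c = colorClass G h hh (Equiv.swap c0 c1 c) :=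
        colorClass_swap G hh hh₁
      have he₁ : expv G h₁ hh₁ = expv G g hg := (expv_swap G hh hh₁).trans he
      set Δ := Finset.univ.filter
        (fun c => colorClass G h hh c ≠ colorClass G g hg c) with hΔ
      set Δ₁ := Finset.univ.filter
        (fun c => colorClass G h₁ hh₁ c ≠ colorClass G g hg c) with hΔ₁
      have hc0Δ : c0 ∈ Δ := Finset.mem_filter.2 ⟨Finset.mem_univ _, hc0⟩
      have hsubΔ : Δ₁ ⊆ Δ.erase c0 := by
        intro c hc
        have hcne : colorClass G h₁ hh₁ c ≠ colorClass G g hg c := (Finset.mem_filter.1 hc).2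
        rw [hcls] at hcne
        rcases eq_or_ne c c0 with rfl | hcc0
        · rw [Equiv.swap_apply_left, hc1S] at hcne
          exact absurd rfl hcne
        · refine Finset.mem_erase.2 ⟨hcc0, Finset.mem_filter.2 ⟨Finset.mem_univ _, ?_⟩⟩
          rcases eq_or_ne c c1 with rfl | hcc1
          · rw [hc1S]
            exact fun hc' => hc1gS hc'.symm
          · rwa [Equiv.swap_apply_of_ne_of_ne hcc0 hcc1] at hcne
      have hlt : Δ₁.card < n := by
        calc Δ₁.card ≤ (Δ.erase c0).card := Finset.card_le_card hsubΔ
        _ < Δ.card := Finset.card_erase_lt_of_mem hc0Δ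
        _ = n := hcard
      exact kempeEquiv_trans G (kempe_swap G hne hh) (ih _ hlt h₁ g hh₁ hg rfl he₁)

lemma kempe_of_expv_eq (G : SimpleGraph (Fin d)) {h g : Fin d → Fin k}
    (hh : IsColoring G k h) (hg : IsColoring G k g)
    (he : expv G h hh = expv G g hg) : KempeEquiv G h g :=
  kempe_of_expv_eq_aux G _ h g hh hg rfl he

end Perm

section Move

variable {d k : ℕ}

open Finset

lemma expv_split (G : SimpleGraph (Fin d)) {f : Fin d → Fin k} (hf : IsColoring G k f)
    {c1 c2 : Fin k} (hne : c1 ≠ c2) :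
    expv G f hf = Finsupp.single (colorClass G f hf c1) 1
      + Finsupp.single (colorClass G f hf c2) 1
      + ∑ c ∈ (Finset.univ.erase c1).erase c2, Finsupp.single (colorClass G f hf c) 1 := by
  rw [expv, ← Finset.add_sum_erase _ _ (Finset.mem_univ c1),
    ← Finset.add_sum_erase _ _ (Finset.mem_erase.2 ⟨hne.symm, Finset.mem_univ c2⟩),
    ← add_assoc]

lemma moveLemma (G : SimpleGraph (Fin d)) (S1 S2 S3 S4 : StableSet G)
    (h12 : Disjoint S1.1 S2.1) (h34 : Disjoint S3.1 S4.1)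
    (hu : S1.1 ∪ S2.1 = S3.1 ∪ S4.1) {h : Fin d → Fin k} (hh : IsColoring G k h)
    (n : StableSet G →₀ ℕ)
    (he : expv G h hh = n + Finsupp.single S1 1 + Finsupp.single S2 1) :
    ∃ (h' : Fin d → Fin k) (hh' : IsColoring G k h'), KempeEquiv G h h' ∧
      expv G h' hh' = n + Finsupp.single S3 1 + Finsupp.single S4 1 := by
  classical
  -- extract two distinct colors whose classes are S1 and S2
  obtain ⟨c1, c2, hcc, hcl1, hcl2⟩ : ∃ c1 c2 : Fin k, c1 ≠ c2 ∧
      colorClass G h hh c1 = S1 ∧ colorClass G h hh c2 = S2 := by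
    by_cases h12' : S1 = S2
    · subst h12'
      have hval : expv G h hh S1 = n S1 + 1 + 1 := by
        rw [he]; simp [Finsupp.add_apply, Finsupp.single_apply]
      rw [expv_apply] at hval
      have h2' : 1 < (Finset.univ.filter (fun c => colorClass G h hh c = S1)).card := by
        omega
      obtain ⟨a, ha, b, hb, hab⟩ := Finset.one_lt_card.1 h2'
      exact ⟨a, b, hab, (Finset.mem_filter.1 ha).2, (Finset.mem_filter.1 hb).2⟩
    · have hval1 : expv G h hh S1 = n S1 + 1 := by
        rw [he]
        simp [Finsupp.add_apply, Finsupp.single_apply, Ne.symm h12']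
      have hval2 : expv G h hh S2 = n S2 + 1 := by
        rw [he]
        simp [Finsupp.add_apply, Finsupp.single_apply, h12']
      rw [expv_apply] at hval1 hval2
      have h1' : 0 < (Finset.univ.filter (fun c => colorClass G h hh c = S1)).card := by
        omega
      have h2' : 0 < (Finset.univ.filter (fun c => colorClass G h hh c = S2)).card := by
        omega
      obtain ⟨a, ha⟩ := Finset.card_pos.1 h1'
      obtain ⟨b, hb⟩ := Finset.card_pos.1 h2'
      have ha' := (Finset.mem_filter.1 ha).2
      have hb' := (Finset.mem_filter.1 hb).2
      exact ⟨a, b, fun hab => h12' (by rw [← ha', hab, hb']), ha', hb'⟩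
  have hv1 : ∀ v, h v = c1 ↔ v ∈ S1.1 := fun v => by
    rw [← mem_colorClass G hh c1 v, hcl1]
  have hv2 : ∀ v, h v = c2 ↔ v ∈ S2.1 := fun v => by
    rw [← mem_colorClass G hh c2 v, hcl2]
  have hu' : ∀ v, (v ∈ S1.1 ∨ v ∈ S2.1) ↔ (v ∈ S3.1 ∨ v ∈ S4.1) := fun v => by
    rw [← Finset.mem_union, ← Finset.mem_union, hu]
  set h' : Fin d → Fin k := fun v => if v ∈ S3.1 then c1 else if v ∈ S4.1 then c2 else h v
    with hh'def
  have hvS3 : ∀ v ∈ S3.1, h' v = c1 := fun v hv => if_pos hv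
  have hvS4 : ∀ v ∈ S4.1, h' v = c2 := fun v hv => by
    have : v ∉ S3.1 := Finset.disjoint_right.1 h34 hv
    simp only [hh'def, if_neg this, if_pos hv]
  have hvout : ∀ v, v ∉ S3.1 → v ∉ S4.1 → h' v = h v := fun v hv3 hv4 => by
    simp only [hh'def, if_neg hv3, if_neg hv4]
  have houtc : ∀ v, v ∉ S3.1 → v ∉ S4.1 → h v ≠ c1 ∧ h v ≠ c2 := by
    intro v hv3 hv4
    constructor
    · intro hc
      exact (not_or.2 ⟨hv3, hv4⟩) ((hu' v).1 (Or.inl ((hv1 v).1 hc)))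
    · intro hc
      exact (not_or.2 ⟨hv3, hv4⟩) ((hu' v).1 (Or.inr ((hv2 v).1 hc)))
  have hh' : IsColoring G k h' := by
    intro u v huv
    by_cases hu3 : u ∈ S3.1 <;> by_cases hv3 : v ∈ S3.1
    · exact absurd huv (S3.2 hu3 hv3)
    · rw [hvS3 u hu3]
      by_cases hv4 : v ∈ S4.1
      · rw [hvS4 v hv4]; exact hcc
      · rw [hvout v hv3 hv4]; exact fun hc => (houtc v hv3 hv4).1 hc.symm
    · rw [hvS3 v hv3]
      by_cases hu4 : u ∈ S4.1
      · rw [hvS4 u hu4]; exact hcc.symm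
      · rw [hvout u hu3 hu4]; exact (houtc u hu3 hu4).1
    · by_cases hu4 : u ∈ S4.1 <;> by_cases hv4 : v ∈ S4.1
      · exact absurd huv (S4.2 hu4 hv4)
      · rw [hvS4 u hu4, hvout v hv3 hv4]
        exact fun hc => (houtc v hv3 hv4).2 hc.symm
      · rw [hvS4 v hv4, hvout u hu3 hu4]
        exact (houtc u hu3 hu4).2
      · rw [hvout u hu3 hu4, hvout v hv3 hv4]
        exact hh huv
  -- color classes of h'
  have hcl1' : colorClass G h' hh' c1 = S3 := by
    apply Subtype.ext
    ext v
    rw [mem_colorClass]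
    constructor
    · intro hc
      by_contra hv3
      by_cases hv4 : v ∈ S4.1
      · exact hcc (((hvS4 v hv4).symm.trans hc).symm)
      · rw [hvout v hv3 hv4] at hc
        exact (houtc v hv3 hv4).1 hc
    · exact hvS3 v
  have hcl2' : colorClass G h' hh' c2 = S4 := by
    apply Subtype.ext
    ext v
    rw [mem_colorClass]
    constructor
    · intro hc
      by_contra hv4
      by_cases hv3 : v ∈ S3.1
      · exact hcc ((hvS3 v hv3).symm.trans hc)
      · rw [hvout v hv3 hv4] at hc
        exact (houtc v hv3 hv4).2 hc
    · exact hvS4 v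
  have hclo : ∀ c, c ≠ c1 → c ≠ c2 → colorClass G h' hh' c = colorClass G h hh c := by
    intro c hc1 hc2
    apply Subtype.ext
    ext v
    rw [mem_colorClass, mem_colorClass]
    by_cases hv3 : v ∈ S3.1
    · rw [hvS3 v hv3]
      have : h v = c1 ∨ h v = c2 := by
        rcases (hu' v).2 (Or.inl hv3) with hv | hv
        · exact Or.inl ((hv1 v).2 hv)
        · exact Or.inr ((hv2 v).2 hv)
      constructor
      · intro hc; exact absurd hc.symm hc1
      · intro hc
        rcases this with hv | hv
        · exact absurd (hv ▸ hc).symm hc1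
        · exact absurd (hv ▸ hc).symm hc2
    · by_cases hv4 : v ∈ S4.1
      · rw [hvS4 v hv4]
        have : h v = c1 ∨ h v = c2 := by
          rcases (hu' v).2 (Or.inr hv4) with hv | hv
          · exact Or.inl ((hv1 v).2 hv)
          · exact Or.inr ((hv2 v).2 hv)
        constructor
        · intro hc; exact absurd hc.symm hc2
        · intro hc
          rcases this with hv | hv
          · exact absurd (hv ▸ hc).symm hc1
          · exact absurd (hv ▸ hc).symm hc2
      · rw [hvout v hv3 hv4]
  -- Kempe equivalence via the two-color swap lemma
  have hke : KempeEquiv G h h' := by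
    refine twoColorSwap G hcc hh hh' ?_ ?_
    · intro v hv
      push_neg at hv
      have hv3 : v ∉ S3.1 := fun hc => by
        rcases (hu' v).2 (Or.inl hc) with hv' | hv'
        · exact hv.1 ((hv1 v).2 hv')
        · exact hv.2 ((hv2 v).2 hv')
      have hv4 : v ∉ S4.1 := fun hc => by
        rcases (hu' v).2 (Or.inr hc) with hv' | hv'
        · exact hv.1 ((hv1 v).2 hv')
        · exact hv.2 ((hv2 v).2 hv')
      exact hvout v hv3 hv4
    · intro v hv
      have : v ∈ S3.1 ∨ v ∈ S4.1 := by
        apply (hu' v).1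
        rcases hv with hv | hv
        · exact Or.inl ((hv1 v).1 hv)
        · exact Or.inr ((hv2 v).1 hv)
      rcases this with hv' | hv'
      · exact Or.inl (hvS3 v hv')
      · exact Or.inr (hvS4 v hv')
  -- exponent vector computation
  set R := ∑ c ∈ (Finset.univ.erase c1).erase c2, Finsupp.single (colorClass G h hh c) 1
    with hR
  have hsh : expv G h hh = Finsupp.single S1 1 + Finsupp.single S2 1 + R := by
    rw [expv_split G hh hcc, hcl1, hcl2]
  have hRn : R = n := by
    have e := hsh.symm.trans he
    apply Finsupp.ext
    intro S
    have e' := DFunLike.congr_fun e S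
    simp only [Finsupp.add_apply] at e'
    omega
  have hsh' : expv G h' hh' = Finsupp.single S3 1 + Finsupp.single S4 1 + R := by
    rw [expv_split G hh' hcc, hcl1', hcl2']
    congr 1
    rw [hR]
    exact Finset.sum_congr rfl fun c hc => by
      rw [hclo c (Finset.mem_erase.1 (Finset.mem_of_mem_erase hc)).1
        (Finset.mem_erase.1 hc).1]
  refine ⟨h', hh', hke, ?_⟩
  rw [hsh', hRn]
  abel

end Move

section Forward

variable {d k : ℕ}

lemma step_mem (G : SimpleGraph (Fin d)) (K : Type) [Field K] {h g : Fin d → Fin k}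
    (hs : KempeStep G h g) (hh : IsColoring G k h) (hg : IsColoring G k g) :
    xMonomial K G h hh - xMonomial K G g hg ∈ idealJ K G := by
  classical
  obtain ⟨-, -, i, j, C, ⟨comp, hC⟩, hsw, hout⟩ := hs
  have hmemC : ∀ v ∈ C, h v = i ∨ h v = j := by
    intro v hv; rw [hC] at hv; obtain ⟨u, _, rfl⟩ := hv; exact u.2
  have hgC : ∀ v ∈ C, g v = i ∨ g v = j := by
    intro v hv
    rcases hmemC v hv with h1 | h1
    · exact Or.inr ((hsw v hv).1 h1)
    · exact Or.inl ((hsw v hv).2 h1)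
  by_cases hij : i = j
  · subst hij
    have : g = h := by
      funext v
      by_cases hv : v ∈ C
      · rcases hmemC v hv with h1 | h1 <;> exact ((hsw v hv).1 h1).trans h1.symm
      · exact hout v hv
    subst this
    have : xMonomial K G g hh = xMonomial K G g hg := rfl
    rw [this, sub_self]
    exact Ideal.zero_mem _
  · have hclass : ∀ c, c ≠ i → c ≠ j → colorClass G g hg c = colorClass G h hh c := by
      intro c hci hcj
      apply Subtype.ext
      ext v
      rw [mem_colorClass, mem_colorClass]
      by_cases hv : v ∈ C
      · constructor
        · intro hc
          rcases hgC v hv with h1 | h1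
          · exact absurd (h1 ▸ hc).symm hci
          · exact absurd (h1 ▸ hc).symm hcj
        · intro hc
          rcases hmemC v hv with h1 | h1
          · exact absurd (h1 ▸ hc).symm hci
          · exact absurd (h1 ▸ hc).symm hcj
      · rw [hout v hv]
    have hdh : Disjoint (colorClass G h hh i).1 (colorClass G h hh j).1 := by
      rw [Finset.disjoint_left]
      intro v hv1 hv2
      rw [mem_colorClass] at hv1 hv2
      exact hij (hv1.symm.trans hv2)
    have hdg : Disjoint (colorClass G g hg i).1 (colorClass G g hg j).1 := by
      rw [Finset.disjoint_left]
      intro v hv1 hv2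
      rw [mem_colorClass] at hv1 hv2
      exact hij (hv1.symm.trans hv2)
    have hun : (colorClass G h hh i).1 ∪ (colorClass G h hh j).1 =
        (colorClass G g hg i).1 ∪ (colorClass G g hg j).1 := by
      ext v
      rw [Finset.mem_union, Finset.mem_union, mem_colorClass, mem_colorClass,
        mem_colorClass, mem_colorClass]
      by_cases hv : v ∈ C
      · exact ⟨fun _ => hgC v hv, fun _ => hmemC v hv⟩
      · rw [hout v hv]
    set Rst : MvPolynomial (StableSet G) K :=
      ∏ c ∈ (Finset.univ.erase i).erase j, X (colorClass G h hh c) with hRst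
    have hxh : xMonomial K G h hh =
        X (colorClass G h hh i) * X (colorClass G h hh j) * Rst := by
      rw [xMonomial, ← Finset.mul_prod_erase _ _ (Finset.mem_univ i),
        ← Finset.mul_prod_erase _ _ (Finset.mem_erase.2 ⟨Ne.symm hij, Finset.mem_univ j⟩),
        ← mul_assoc]
    have hxg : xMonomial K G g hg =
        X (colorClass G g hg i) * X (colorClass G g hg j) * Rst := by
      rw [xMonomial, ← Finset.mul_prod_erase _ _ (Finset.mem_univ i),
        ← Finset.mul_prod_erase _ _ (Finset.mem_erase.2 ⟨Ne.symm hij, Finset.mem_univ j⟩),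
        ← mul_assoc]
      congr 1
      rw [hRst]
      exact Finset.prod_congr rfl fun c hc => by
        rw [hclass c (Finset.mem_erase.1 (Finset.mem_of_mem_erase hc)).1
          (Finset.mem_erase.1 hc).1]
    have hgen : X (colorClass G h hh i) * X (colorClass G h hh j) -
        X (colorClass G g hg i) * X (colorClass G g hg j) ∈ idealJ K G :=
      Ideal.subset_span ⟨colorClass G h hh i, colorClass G h hh j,
        colorClass G g hg i, colorClass G g hg j, hdh, hdg, hun, rfl⟩
    have : xMonomial K G h hh - xMonomial K G g hg =
        Rst * (X (colorClass G h hh i) * X (colorClass G h hh j) -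
          X (colorClass G g hg i) * X (colorClass G g hg j)) := by
      rw [hxh, hxg]; ring
    rw [this]
    exact Ideal.mul_mem_left _ Rst hgen

lemma forward_mem (G : SimpleGraph (Fin d)) (K : Type) [Field K] {f g : Fin d → Fin k}
    (hf : IsColoring G k f) (hke : KempeEquiv G f g) :
    ∀ (hg : IsColoring G k g),
      xMonomial K G f hf - xMonomial K G g hg ∈ idealJ K G := by
  induction hke with
  | refl =>
      intro hg
      have : xMonomial K G f hf = xMonomial K G f hg := rfl
      rw [this, sub_self]
      exact Ideal.zero_mem _
  | @tail b c hab hbc ih =>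
      intro hg
      have hb : IsColoring G k b := hbc.1
      have h1 := ih hb
      have h2 := step_mem G K hbc hb hg
      have : xMonomial K G f hf - xMonomial K G c hg =
          (xMonomial K G f hf - xMonomial K G b hb) +
          (xMonomial K G b hb - xMonomial K G c hg) := by ring
      rw [this]
      exact Ideal.add_mem _ h1 h2

end Forward

section Tfun

open Classical in
/-- indicator of a predicate on exponent vectors -/
noncomputable def indK {σ : Type} (K : Type) [Field K] (pred : (σ →₀ ℕ) → Prop) :
    (σ →₀ ℕ) → K := fun m => if pred m then 1 else 0

/-- the linear functional summing coefficients weighted by the indicator -/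
noncomputable def Tf {σ : Type} (K : Type) [Field K] (pred : (σ →₀ ℕ) → Prop)
    (p : MvPolynomial σ K) : K :=
  ∑ m ∈ p.support, indK K pred m * coeff m p

variable {σ : Type} {K : Type} [Field K] {pred : (σ →₀ ℕ) → Prop}

lemma Tf_superset (p : MvPolynomial σ K) (s : Finset (σ →₀ ℕ)) (hs : p.support ⊆ s) :
    Tf K pred p = ∑ m ∈ s, indK K pred m * coeff m p := by
  refine Finset.sum_subset hs fun m _ hm => ?_
  rw [MvPolynomial.notMem_support_iff.1 hm, mul_zero]

lemma Tf_sub (p q : MvPolynomial σ K) : Tf K pred (p - q) = Tf K pred p - Tf K pred q := by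
  classical
  set s := (p - q).support ∪ (p.support ∪ q.support) with hs
  rw [Tf_superset (p - q) s (by simp [hs]), Tf_superset p s (by intro m hm; simp [hs, hm]),
    Tf_superset q s (by intro m hm; simp [hs, hm]), ← Finset.sum_sub_distrib]
  refine Finset.sum_congr rfl fun m _ => ?_
  rw [MvPolynomial.coeff_sub, mul_sub]

lemma Tf_monomial (u : σ →₀ ℕ) : Tf K pred (monomial u (1 : K)) = indK K pred u := by
  classical
  rw [Tf, support_monomial]
  simp [coeff_monomial]

lemma Tf_mul_monomial (q : MvPolynomial σ K) (u : σ →₀ ℕ) :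
    Tf K pred (q * monomial u 1) = ∑ n ∈ q.support, indK K pred (n + u) * coeff n q := by
  classical
  have hsub : (q * monomial u (1 : K)).support ⊆ q.support.image (· + u) := by
    intro m hm
    have hc := MvPolynomial.mem_support_iff.1 hm
    rw [coeff_mul_monomial'] at hc
    by_cases hle : u ≤ m
    · rw [if_pos hle, mul_one] at hc
      refine Finset.mem_image.2 ⟨m - u, MvPolynomial.mem_support_iff.2 hc, ?_⟩
      exact tsub_add_cancel_of_le hle
    · rw [if_neg hle] at hc
      exact absurd rfl hc
  rw [Tf_superset _ _ hsub,
    Finset.sum_image (fun n₁ _ n₂ _ he => by exact add_right_cancel he)]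
  refine Finset.sum_congr rfl fun n _ => ?_
  rw [coeff_mul_monomial']
  rw [if_pos (le_add_self : u ≤ n + u)]
  have : n + u - u = n := by
    ext a
    simp [Finsupp.tsub_apply, Finsupp.add_apply]
  rw [this, mul_one]

end Tfun

section Backward

variable {d k : ℕ}

lemma Tf_vanish (G : SimpleGraph (Fin d)) (K : Type) [Field K]
    (pred : (StableSet G →₀ ℕ) → Prop)
    (hcompat : ∀ S1 S2 S3 S4 : StableSet G, Disjoint S1.1 S2.1 → Disjoint S3.1 S4.1 →
      S1.1 ∪ S2.1 = S3.1 ∪ S4.1 → ∀ n : StableSet G →₀ ℕ,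
      (pred (n + (Finsupp.single S1 1 + Finsupp.single S2 1)) ↔
        pred (n + (Finsupp.single S3 1 + Finsupp.single S4 1)))) :
    ∀ p ∈ idealJ K G, Tf K pred p = 0 := by
  classical
  have main : ∀ p ∈ idealJ K G, ∀ q : MvPolynomial (StableSet G) K,
      Tf K pred (q * p) = 0 := by
    intro p hp
    induction hp using Submodule.span_induction with
    | mem x hx =>
        obtain ⟨S1, S2, S3, S4, h12, h34, hu, rfl⟩ := hx
        intro q
        have e1 : (X S1 : MvPolynomial (StableSet G) K) * X S2 =
            monomial (Finsupp.single S1 1 + Finsupp.single S2 1) 1 := by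
          rw [X, X, monomial_mul, one_mul]
        have e2 : (X S3 : MvPolynomial (StableSet G) K) * X S4 =
            monomial (Finsupp.single S3 1 + Finsupp.single S4 1) 1 := by
          rw [X, X, monomial_mul, one_mul]
        rw [mul_sub, e1, e2, Tf_sub, Tf_mul_monomial, Tf_mul_monomial, ← Finset.sum_sub_distrib]
        refine Finset.sum_eq_zero fun n _ => ?_
        have : indK K pred (n + (Finsupp.single S1 1 + Finsupp.single S2 1)) =
            indK K pred (n + (Finsupp.single S3 1 + Finsupp.single S4 1)) := by
          unfold indK
          split_ifs with h1 h2 h2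
          · rfl
          · exact absurd ((hcompat S1 S2 S3 S4 h12 h34 hu n).1 h1) h2
          · exact absurd ((hcompat S1 S2 S3 S4 h12 h34 hu n).2 h2) h1
          · rfl
        rw [this, sub_self]
    | zero => intro q; rw [mul_zero]; simp [Tf]
    | add a b _ _ ha hb =>
        intro q
        rw [mul_add]
        have : q * a + q * b = (q * a + q * b - q * b) + q * b := by ring
        rw [show q * a + q * b - q * b = q * a by ring] at this
        rw [this]
        have := Tf_sub (p := q * a + q * b) (q := q * b) (pred := pred)
        calc Tf K pred (q * a + q * b)
            = Tf K pred (q * a + q * b - q * b) + Tf K pred (q * b) := by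
              rw [Tf_sub]; ring
          _ = 0 := by rw [show q * a + q * b - q * b = q * a by ring, ha q, hb q, add_zero]
    | smul r a _ ha =>
        intro q
        rw [smul_eq_mul, ← mul_assoc]
        exact ha (q * r)
  intro p hp
  have := main p hp 1
  rwa [one_mul] at this

end Backward

theorem kempe_equiv_iff_mem_idealJ {d k : ℕ} (G : SimpleGraph (Fin d))
    (K : Type) [Field K] (f g : Fin d → Fin k)
    (hf : IsColoring G k f) (hg : IsColoring G k g) :
    KempeEquiv G f g ↔ xMonomial K G f hf - xMonomial K G g hg ∈ idealJ K G := by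
  constructor
  · intro hke
    exact forward_mem G K hf hke hg
  · intro hmem
    set pred : (StableSet G →₀ ℕ) → Prop := fun m =>
      ∀ (h : Fin d → Fin k) (hh : IsColoring G k h), expv G h hh = m → KempeEquiv G f h
      with hpreddef
    have hcompat : ∀ S1 S2 S3 S4 : StableSet G, Disjoint S1.1 S2.1 → Disjoint S3.1 S4.1 →
        S1.1 ∪ S2.1 = S3.1 ∪ S4.1 → ∀ n : StableSet G →₀ ℕ,
        (pred (n + (Finsupp.single S1 1 + Finsupp.single S2 1)) ↔
          pred (n + (Finsupp.single S3 1 + Finsupp.single S4 1))) := by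
      intro S1 S2 S3 S4 h12 h34 hu n
      constructor
      · intro hp h' hh' hexp
        obtain ⟨h'', hh'', hke'', hexp''⟩ := moveLemma G S3 S4 S1 S2 h34 h12 hu.symm hh' n
          (by rw [hexp, add_assoc])
        have h1 : KempeEquiv G f h'' := hp h'' hh'' (by rw [hexp'', add_assoc])
        exact kempeEquiv_trans G h1 (kempeEquiv_symm G hke'')
      · intro hp h' hh' hexp
        obtain ⟨h'', hh'', hke'', hexp''⟩ := moveLemma G S1 S2 S3 S4 h12 h34 hu hh' n
          (by rw [hexp, add_assoc])
        have h1 : KempeEquiv G f h'' := hp h'' hh'' (by rw [hexp'', add_assoc])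
        exact kempeEquiv_trans G h1 (kempeEquiv_symm G hke'')
    have hvanish := Tf_vanish G K pred hcompat _ hmem
    rw [xMonomial_eq, xMonomial_eq, Tf_sub, Tf_monomial, Tf_monomial] at hvanish
    have hpf : pred (expv G f hf) := fun h hh hexp => kempe_of_expv_eq G hf hh hexp.symm
    have h1 : indK K pred (expv G f hf) = 1 := by unfold indK; rw [if_pos hpf]
    have hpg : pred (expv G g hg) := by
      by_contra hng
      have h0 : indK K pred (expv G g hg) = 0 := by unfold indK; rw [if_neg hng]
      rw [h1, h0, sub_zero] at hvanish
      exact one_ne_zero hvanish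
    exact hpg g hg rfl
end

section
/- For every graph G on d vertices, the Hilbert function H(R[G]/K_G, k) equals 2^d for all k ≥ Δ(G) + 1, where Δ(G) is the maximum degree of G; hence the Hilbert polynomial of R[G]/K_G is the constant 2^d. -/
open MvPolynomial

section Comb
variable {d k : ℕ} (G : SimpleGraph (Fin d)) [DecidableRel G.Adj]

def Proper (W : Finset (Fin d)) (f : Fin d → Fin k) : Prop :=
  ∀ ⦃u⦄, u ∈ W → ∀ ⦃w⦄, w ∈ W → G.Adj u w → f u ≠ f w

lemma Proper.mono {W' W : Finset (Fin d)} {f : Fin d → Fin k} (h : W' ⊆ W)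
    (hf : Proper G W f) : Proper G W' f :=
  fun _ hu _ hw => hf (h hu) (h hw)

def JStep (W : Finset (Fin d)) (f g : Fin d → Fin k) : Prop :=
  Proper G W f ∧ Proper G W g ∧ ∃ a b : Fin k,
    (∀ u ∈ W, f u ≠ a → f u ≠ b → g u = f u) ∧
    (∀ u ∈ W, (g u = a ∨ g u = b) ↔ (f u = a ∨ f u = b))

def JEquiv (W : Finset (Fin d)) (f g : Fin d → Fin k) : Prop :=
  Relation.ReflTransGen (JStep G W) f g

lemma jstep_of_eqOn {W : Finset (Fin d)} {f g : Fin d → Fin k} (hk : 0 < k)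
    (hf : Proper G W f) (hg : Proper G W g) (h : ∀ u ∈ W, g u = f u) :
    JStep G W f g :=
  ⟨hf, hg, ⟨0, hk⟩, ⟨0, hk⟩, fun u hu _ _ => h u hu, fun u hu => by rw [h u hu]⟩

lemma jstep_single {W : Finset (Fin d)} {f g : Fin d → Fin k} (v : Fin d) (hv : v ∈ W)
    (hf : Proper G W f) (hg : Proper G W g) (h : ∀ u ∈ W.erase v, g u = f u) :
    JStep G W f g := by
  refine ⟨hf, hg, f v, g v, ?_, ?_⟩
  · intro u hu hua _
    rcases eq_or_ne u v with rfl | hne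
    · exact absurd rfl hua
    · exact h u (Finset.mem_erase.mpr ⟨hne, hu⟩)
  · intro u hu
    rcases eq_or_ne u v with rfl | hne
    · simp
    · rw [h u (Finset.mem_erase.mpr ⟨hne, hu⟩)]

lemma proper_ite {W : Finset (Fin d)} {v : Fin d} {t : Fin d → Fin k} {γ : Fin k}
    (hprop : Proper G (W.erase v) t)
    (hγ : ∀ u ∈ W.erase v, G.Adj v u → t u ≠ γ) :
    Proper G W (fun u => if u = v then γ else t u) := by
  intro u hu w hw hadj
  by_cases hu' : u = v <;> by_cases hw' : w = v
  · exact absurd hadj (by rw [hu', hw']; exact G.loopless.irrefl v)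
  · simp only [if_pos hu', if_neg hw']
    exact fun he => hγ w (Finset.mem_erase.mpr ⟨hw', hw⟩) (hu' ▸ hadj) he.symm
  · simp only [if_neg hu', if_pos hw']
    exact hγ u (Finset.mem_erase.mpr ⟨hu', hu⟩) (G.adj_symm (hw' ▸ hadj))
  · simp only [if_neg hu', if_neg hw']
    exact hprop (Finset.mem_erase.mpr ⟨hu', hu⟩) (Finset.mem_erase.mpr ⟨hw', hw⟩) hadj

lemma exists_free_color {W' : Finset (Fin d)} (hk : G.maxDegree < k) (v : Fin d)
    (H : Fin d → Fin k) (a b : Fin k) (ua ub : Fin d)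
    (haadj : G.Adj v ua) (hamem : ua ∈ W') (haH : H ua = a ∨ H ua = b)
    (hbadj : G.Adj v ub) (hbmem : ub ∈ W') (hbH : H ub = a ∨ H ub = b)
    (hne : ua ≠ ub) :
    ∃ c : Fin k, c ≠ a ∧ c ≠ b ∧ ∀ u ∈ W', G.Adj v u → H u ≠ c := by
  by_contra hcon
  push_neg at hcon
  have hC : ∀ c : Fin k, ∃ u, G.Adj v u ∧
      ((c ≠ a ∧ c ≠ b ∧ H u = c) ∨ (c = a ∧ u = ua) ∨ (c ≠ a ∧ c = b ∧ u = ub)) := by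
    intro c
    by_cases hca : c = a
    · exact ⟨ua, haadj, Or.inr (Or.inl ⟨hca, rfl⟩)⟩
    by_cases hcb : c = b
    · exact ⟨ub, hbadj, Or.inr (Or.inr ⟨hca, hcb, rfl⟩)⟩
    obtain ⟨u, hu, hadj, hHu⟩ := hcon c hca hcb
    exact ⟨u, hadj, Or.inl ⟨hca, hcb, hHu⟩⟩
  choose φ hadj hspec using hC
  have hinj : Function.Injective φ := by
    intro c c' hcc
    by_contra hne'
    rcases hspec c with ⟨hc1, hc2, hc3⟩ | ⟨hc1, hc2⟩ | ⟨hc0, hc1, hc2⟩ <;>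
      rcases hspec c' with ⟨hd1, hd2, hd3⟩ | ⟨hd1, hd2⟩ | ⟨hd0, hd1, hd2⟩
    · exact hne' (hc3 ▸ hd3 ▸ (by rw [hcc]))
    · rw [hcc, hd2] at hc3
      rcases haH with h | h <;> [exact hc1 (hc3 ▸ h); exact hc2 (hc3 ▸ h)]
    · rw [hcc, hd2] at hc3
      rcases hbH with h | h <;> [exact hc1 (hc3 ▸ h); exact hc2 (hc3 ▸ h)]
    · rw [← hcc, hc2] at hd3
      rcases haH with h | h <;> [exact hd1 (hd3 ▸ h); exact hd2 (hd3 ▸ h)]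
    · exact hne' (hc1.trans hd1.symm)
    · rw [hc2, hd2] at hcc; exact hne hcc
    · rw [← hcc, hc2] at hd3
      rcases hbH with h | h <;> [exact hd1 (hd3 ▸ h); exact hd2 (hd3 ▸ h)]
    · rw [hc2, hd2] at hcc; exact hne hcc.symm
    · exact hne' (hc1.trans hd1.symm)
  have hcard : Fintype.card (Fin k) ≤ Fintype.card (G.neighborFinset v) := by
    refine Fintype.card_le_of_injective
      (fun c => ⟨φ c, (SimpleGraph.mem_neighborFinset _ _ _).mpr (hadj c)⟩) ?_
    intro c c' h
    exact hinj (Subtype.ext_iff.mp h)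
  rw [Fintype.card_fin, Fintype.card_coe] at hcard
  have := (G.degree_le_maxDegree v)
  rw [SimpleGraph.degree] at this
  omega


lemma jstep_congr_left {W : Finset (Fin d)} {H y z : Fin d → Fin k}
    (hHy : ∀ u ∈ W, H u = y u) (hH : Proper G W H) (hs : JStep G W y z) :
    JStep G W H z := by
  obtain ⟨hy, hz, a, b, hcond, hclass⟩ := hs
  refine ⟨hH, hz, a, b, ?_, ?_⟩
  · intro u hu h1 h2
    rw [hHy u hu] at h1 h2 ⊢
    exact hcond u hu h1 h2
  · intro u hu
    rw [hHy u hu]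
    exact hclass u hu

/-- Core lifting lemma, assuming `H v = a`. -/
lemma lift_core {W : Finset (Fin d)} {v : Fin d} (hv : v ∈ W) {H h' : Fin d → Fin k}
    (hk : G.maxDegree < k)
    (hH : Proper G W H) (hh' : Proper G (W.erase v) h') {a b : Fin k} (hab : a ≠ b)
    (hcond : ∀ u ∈ W.erase v, H u ≠ a → H u ≠ b → h' u = H u)
    (hclass : ∀ u ∈ W.erase v, (h' u = a ∨ h' u = b) ↔ (H u = a ∨ H u = b))
    (hva : H v = a) :
    ∃ H', JEquiv G W H H' ∧ Proper G W H' ∧ ∀ u ∈ W.erase v, H' u = h' u := by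
  set W' := W.erase v with hW'
  have key : ∀ u ∈ W', h' u ≠ a → h' u ≠ b → h' u = H u := by
    intro u hu h1 h2
    have : ¬ (H u = a ∨ H u = b) := by
      rw [← hclass u hu]; tauto
    push_neg at this
    exact hcond u hu this.1 this.2
  by_cases hA : ∀ u ∈ W', G.Adj v u → h' u ≠ a
  · refine ⟨fun u => if u = v then a else h' u,
      Relation.ReflTransGen.single ⟨hH, proper_ite G hh' hA, a, b, ?_, ?_⟩,
      proper_ite G hh' hA, fun u hu => if_neg (Finset.mem_erase.mp hu).1⟩
    · intro u hu h1 h2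
      rcases eq_or_ne u v with rfl | hne
      · exact absurd hva h1
      · simp only [if_neg hne]
        exact hcond u (Finset.mem_erase.mpr ⟨hne, hu⟩) h1 h2
    · intro u hu
      rcases eq_or_ne u v with rfl | hne
      · simp only [if_pos rfl]
        exact iff_of_true (by tauto) (Or.inl hva)
      · simp only [if_neg hne]
        exact hclass u (Finset.mem_erase.mpr ⟨hne, hu⟩)
  by_cases hB : ∀ u ∈ W', G.Adj v u → h' u ≠ b
  · refine ⟨fun u => if u = v then b else h' u,
      Relation.ReflTransGen.single ⟨hH, proper_ite G hh' hB, a, b, ?_, ?_⟩,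
      proper_ite G hh' hB, fun u hu => if_neg (Finset.mem_erase.mp hu).1⟩
    · intro u hu h1 h2
      rcases eq_or_ne u v with rfl | hne
      · exact absurd hva h1
      · simp only [if_neg hne]
        exact hcond u (Finset.mem_erase.mpr ⟨hne, hu⟩) h1 h2
    · intro u hu
      rcases eq_or_ne u v with rfl | hne
      · simp only [if_pos rfl]
        exact iff_of_true (by tauto) (Or.inl hva)
      · simp only [if_neg hne]
        exact hclass u (Finset.mem_erase.mpr ⟨hne, hu⟩)
  push_neg at hA hB
  obtain ⟨ua, hamem, haadj, haa⟩ := hA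
  obtain ⟨ub, hbmem, hbadj, hbb⟩ := hB
  have hane : ua ≠ ub := fun h => hab (haa ▸ hbb ▸ (h ▸ rfl))
  have haH : H ua = a ∨ H ua = b := (hclass ua hamem).mp (Or.inl haa)
  have hbH : H ub = a ∨ H ub = b := (hclass ub hbmem).mp (Or.inr hbb)
  obtain ⟨c, hca, hcb, hfree⟩ :=
    exists_free_color G hk v H a b ua ub haadj hamem haH hbadj hbmem hbH hane
  -- step 1 : recolor v from a to c
  have hHW' : Proper G W' H := Proper.mono G (Finset.erase_subset _ _) hH
  have hfreeH : ∀ u ∈ W', G.Adj v u → H u ≠ c := fun u hu hadj => hfree u hu hadj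
  set H₁ : Fin d → Fin k := fun u => if u = v then c else H u with hH₁
  have hH₁prop : Proper G W H₁ := proper_ite G hHW' hfreeH
  have step1 : JStep G W H H₁ := by
    refine ⟨hH, hH₁prop, a, c, ?_, ?_⟩
    · intro u hu h1 _
      rcases eq_or_ne u v with rfl | hne
      · exact absurd hva h1
      · simp only [hH₁, if_neg hne]
    · intro u hu
      rcases eq_or_ne u v with rfl | hne
      · simp only [hH₁, if_pos rfl]
        exact iff_of_true (by tauto) (Or.inl hva)
      · simp only [hH₁, if_neg hne]
  -- step 2 : do the move, with v parked at color c
  have hfreeh' : ∀ u ∈ W', G.Adj v u → h' u ≠ c := by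
    intro u hu hadj hc
    have h1 : h' u ≠ a := fun h => hca (hc ▸ h ▸ rfl)
    have h2 : h' u ≠ b := fun h => hcb (hc ▸ h ▸ rfl)
    exact hfreeH u hu hadj ((key u hu h1 h2) ▸ hc)
  set H₂ : Fin d → Fin k := fun u => if u = v then c else h' u with hH₂
  have hH₂prop : Proper G W H₂ := proper_ite G hh' hfreeh'
  have step2 : JStep G W H₁ H₂ := by
    refine ⟨hH₁prop, hH₂prop, a, b, ?_, ?_⟩
    · intro u hu h1 h2
      rcases eq_or_ne u v with rfl | hne
      · simp only [hH₁, hH₂, if_pos rfl]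
      · simp only [hH₁, if_neg hne] at h1 h2
        simp only [hH₁, hH₂, if_neg hne]
        exact hcond u (Finset.mem_erase.mpr ⟨hne, hu⟩) h1 h2
    · intro u hu
      rcases eq_or_ne u v with rfl | hne
      · simp only [hH₁, hH₂, if_pos rfl]
      · simp only [hH₁, hH₂, if_neg hne]
        exact hclass u (Finset.mem_erase.mpr ⟨hne, hu⟩)
  exact ⟨H₂, Relation.ReflTransGen.tail (Relation.ReflTransGen.single step1) step2,
    hH₂prop, fun u hu => if_neg (Finset.mem_erase.mp hu).1⟩

lemma proper_congr {W : Finset (Fin d)} {f g : Fin d → Fin k}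
    (h : ∀ u ∈ W, f u = g u) (hg : Proper G W g) : Proper G W f := by
  intro u hu w hw hadj
  rw [h u hu, h w hw]
  exact hg hu hw hadj

lemma lift_step {W : Finset (Fin d)} {v : Fin d} (hv : v ∈ W) {H h' : Fin d → Fin k}
    (hk : G.maxDegree < k)
    (hH : Proper G W H) (hs : JStep G (W.erase v) H h') :
    ∃ H', JEquiv G W H H' ∧ Proper G W H' ∧ ∀ u ∈ W.erase v, H' u = h' u := by
  have hk0 : 0 < k := Nat.lt_of_le_of_lt (Nat.zero_le _) hk
  obtain ⟨hHe, hh', a, b, hcond, hclass⟩ := hs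
  have key : ∀ u ∈ W.erase v, h' u ≠ a → h' u ≠ b → h' u = H u := by
    intro u hu h1 h2
    have : ¬ (H u = a ∨ H u = b) := by
      rw [← hclass u hu]; tauto
    push_neg at this
    exact hcond u hu this.1 this.2
  by_cases hab : a = b
  · -- degenerate move : h' agrees with H on W.erase v
    have hagree : ∀ u ∈ W.erase v, h' u = H u := by
      intro u hu
      by_cases h1 : H u = a
      · rcases (hclass u hu).mpr (Or.inl h1) with h | h
        · rw [h, h1]
        · rw [h, ← hab, h1]
      · exact hcond u hu h1 (hab ▸ h1)
    have hagreeW : ∀ u ∈ W, (fun u => if u = v then H v else h' u) u = H u := by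
      intro u hu
      rcases eq_or_ne u v with rfl | hne
      · simp
      · simp only [if_neg hne]
        exact hagree u (Finset.mem_erase.mpr ⟨hne, hu⟩)
    have hprop : Proper G W (fun u => if u = v then H v else h' u) :=
      proper_congr G hagreeW hH
    exact ⟨_, Relation.ReflTransGen.single (jstep_of_eqOn G hk0 hH hprop hagreeW),
      hprop, fun u hu => if_neg (Finset.mem_erase.mp hu).1⟩
  by_cases hva : H v = a
  · exact lift_core G hv hk hH hh' hab hcond hclass hva
  by_cases hvb : H v = b
  · have hcond' : ∀ u ∈ W.erase v, H u ≠ b → H u ≠ a → h' u = H u :=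
      fun u hu h1 h2 => hcond u hu h2 h1
    have hclass' : ∀ u ∈ W.erase v, (h' u = b ∨ h' u = a) ↔ (H u = b ∨ H u = a) := by
      intro u hu
      rw [or_comm, or_comm (a := H u = b)]
      exact hclass u hu
    exact lift_core G hv hk hH hh' (Ne.symm hab) hcond' hclass' hvb
  · -- v's color is not involved in the move
    have hγ : ∀ u ∈ W.erase v, G.Adj v u → h' u ≠ H v := by
      intro u hu hadj he
      have h1 : h' u ≠ a := fun h => hva (by rw [← he, h])
      have h2 : h' u ≠ b := fun h => hvb (by rw [← he, h])
      have := key u hu h1 h2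
      exact hH (Finset.mem_erase.mp hu).2 hv hadj.symm (this ▸ he)
    have hprop : Proper G W (fun u => if u = v then H v else h' u) :=
      proper_ite G hh' hγ
    refine ⟨_, Relation.ReflTransGen.single ⟨hH, hprop, a, b, ?_, ?_⟩, hprop,
      fun u hu => if_neg (Finset.mem_erase.mp hu).1⟩
    · intro u hu h1 h2
      rcases eq_or_ne u v with rfl | hne
      · simp
      · simp only [if_neg hne]
        exact hcond u (Finset.mem_erase.mpr ⟨hne, hu⟩) h1 h2
    · intro u hu
      rcases eq_or_ne u v with rfl | hne
      · simp only [if_pos rfl]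
        exact iff_of_false (by tauto) (by tauto)
      · simp only [if_neg hne]
        exact hclass u (Finset.mem_erase.mpr ⟨hne, hu⟩)

theorem main_equiv (hk : G.maxDegree < k) :
    ∀ (W : Finset (Fin d)) (f g : Fin d → Fin k),
      Proper G W f → Proper G W g → JEquiv G W f g := by
  have hk0 : 0 < k := Nat.lt_of_le_of_lt (Nat.zero_le _) hk
  intro W
  induction W using Finset.strongInduction with
  | _ W ih =>
    intro f g hf hg
    rcases W.eq_empty_or_nonempty with rfl | ⟨v, hv⟩
    · exact Relation.ReflTransGen.single
        (jstep_of_eqOn G hk0 hf hg (fun u hu => absurd hu (Finset.notMem_empty u)))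
    have hss : W.erase v ⊂ W := Finset.erase_ssubset hv
    have hsub : W.erase v ⊆ W := Finset.erase_subset _ _
    have hchain : JEquiv G (W.erase v) f g := ih _ hss f g (Proper.mono G hsub hf) (Proper.mono G hsub hg)
    -- lift the chain
    have lift : ∀ h, JEquiv G (W.erase v) f h →
        ∃ H, JEquiv G W f H ∧ Proper G W H ∧ ∀ u ∈ W.erase v, H u = h u := by
      intro h hh
      induction hh with
      | refl => exact ⟨f, Relation.ReflTransGen.refl, hf, fun u _ => rfl⟩
      | tail hxy hstep ihh =>
        obtain ⟨H, hHequiv, hHprop, hHeq⟩ := ihh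
        have hstep' : JStep G (W.erase v) H _ :=
          jstep_congr_left G hHeq (Proper.mono G hsub hHprop) hstep
        obtain ⟨H', h1, h2, h3⟩ := lift_step G hv hk hHprop hstep'
        exact ⟨H', hHequiv.trans h1, h2, h3⟩
    obtain ⟨H, hHequiv, hHprop, hHeq⟩ := lift g hchain
    exact hHequiv.tail (jstep_single G v hv hHprop hg (fun u hu => (hHeq u hu).symm))


lemma exists_proper (hk : G.maxDegree < k) :
    ∃ f : Fin d → Fin k, Proper G Finset.univ f := by
  have hk0 : 0 < k := Nat.lt_of_le_of_lt (Nat.zero_le _) hk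
  have main : ∀ n : ℕ, ∃ f : Fin d → Fin k,
      ∀ u w : Fin d, u.val < n → w.val < n → G.Adj u w → f u ≠ f w := by
    intro n
    induction n with
    | zero => exact ⟨fun _ => ⟨0, hk0⟩, fun u w hu _ _ => absurd hu (Nat.not_lt_zero _)⟩
    | succ n ihn =>
      obtain ⟨f, hf⟩ := ihn
      by_cases hnd : n < d
      · set v : Fin d := ⟨n, hnd⟩ with hv
        set F : Finset (Fin k) :=
          ((G.neighborFinset v).filter (fun u => u.val < n)).image f with hF
        have hFcard : F.card < k := by
          calc F.card ≤ ((G.neighborFinset v).filter (fun u => u.val < n)).card :=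
                Finset.card_image_le
            _ ≤ (G.neighborFinset v).card := Finset.card_filter_le _ _
            _ ≤ G.maxDegree := G.degree_le_maxDegree v
            _ < k := hk
        have : ∃ c : Fin k, c ∉ F := by
          by_contra hcon
          push_neg at hcon
          have : (Finset.univ : Finset (Fin k)) ⊆ F := fun c _ => hcon c
          have := Finset.card_le_card this
          simp only [Finset.card_univ, Fintype.card_fin] at this
          omega
        obtain ⟨c, hc⟩ := this
        refine ⟨fun u => if u = v then c else f u, ?_⟩
        intro u w hu hw hadj
        have huv : u ≠ v → u.val < n := by
          intro h
          rcases Nat.lt_succ_iff_lt_or_eq.mp hu with h' | h'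
          · exact h'
          · exact absurd (Fin.ext h') h
        have hwv : w ≠ v → w.val < n := by
          intro h
          rcases Nat.lt_succ_iff_lt_or_eq.mp hw with h' | h'
          · exact h'
          · exact absurd (Fin.ext h') h
        by_cases hu' : u = v <;> by_cases hw' : w = v
        · exact absurd hadj (by rw [hu', hw']; exact G.loopless.irrefl v)
        · simp only [if_pos hu', if_neg hw']
          intro he
          apply hc
          rw [hF]
          refine Finset.mem_image.mpr ⟨w, Finset.mem_filter.mpr
            ⟨(SimpleGraph.mem_neighborFinset _ _ _).mpr (hu' ▸ hadj), hwv hw'⟩, he.symm⟩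
        · simp only [if_neg hu', if_pos hw']
          intro he
          apply hc
          rw [hF]
          refine Finset.mem_image.mpr ⟨u, Finset.mem_filter.mpr
            ⟨(SimpleGraph.mem_neighborFinset _ _ _).mpr (G.adj_symm (hw' ▸ hadj)), huv hu'⟩, he⟩
        · simp only [if_neg hu', if_neg hw']
          exact hf u w (huv hu') (hwv hw') hadj
      · refine ⟨f, fun u w hu hw hadj => hf u w ?_ ?_ hadj⟩ <;> omega
  obtain ⟨f, hf⟩ := main d
  exact ⟨f, fun u hu w hw hadj => hf u w u.isLt w.isLt hadj⟩

end Comb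
section Alg
open MvPolynomial
variable {d k : ℕ} (G : SimpleGraph (Fin d)) [DecidableRel G.Adj] (K : Type) [Field K]

/-- The color class of `f` on `W` at color `c`, as a stable set. -/
def cls (W : Finset (Fin d)) (f : Fin d → Fin k) (hf : Proper G W f) (c : Fin k) :
    StableSet G :=
  ⟨W.filter (fun v => f v = c), by
    intro i hi j hj hadj
    rw [Finset.mem_filter] at hi hj
    exact hf hi.1 hj.1 hadj (hi.2.trans hj.2.symm)⟩

noncomputable def MON (W : Finset (Fin d)) (f : Fin d → Fin k) (hf : Proper G W f) :
    MvPolynomial (StableSet G) K :=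
  ∏ c : Fin k, X (cls G W f hf c)

lemma prod_X_eq {σ α : Type*} {R : Type*} [CommSemiring R] (s : Finset α) (g : α → σ) :
    ∏ i ∈ s, (X (g i) : MvPolynomial σ R) =
      monomial (∑ i ∈ s, Finsupp.single (g i) 1) 1 := by
  classical
  induction s using Finset.induction_on with
  | empty => simp [monomial_zero']
  | @insert _ _ hna ih =>
    rw [Finset.prod_insert hna, Finset.sum_insert hna, ih, X, monomial_mul, one_mul]

lemma MON_homog (W : Finset (Fin d)) (f : Fin d → Fin k) (hf : Proper G W f) :
    MON G K W f hf ∈ homogeneousSubmodule (StableSet G) K k := by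
  rw [mem_homogeneousSubmodule]
  have := MvPolynomial.IsHomogeneous.prod (Finset.univ : Finset (Fin k))
    (fun c => (X (cls G W f hf c) : MvPolynomial (StableSet G) K)) (fun _ => 1)
    (fun c _ => isHomogeneous_X _ _)
  simpa [MON] using this

lemma MON_congr (W : Finset (Fin d)) (f g : Fin d → Fin k) (hf : Proper G W f)
    (hg : Proper G W g) (h : ∀ u ∈ W, f u = g u) :
    MON G K W f hf = MON G K W g hg := by
  unfold MON
  apply Finset.prod_congr rfl
  intro c _
  congr 1
  apply Subtype.ext
  apply Finset.filter_congr
  intro v hv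
  rw [h v hv]

lemma MON_sub_step_mem {W : Finset (Fin d)} {f g : Fin d → Fin k}
    (hs : JStep G W f g) :
    MON G K W f hs.1 - MON G K W g hs.2.1 ∈ idealJ K G := by
  obtain ⟨hf, hg, a, b, hcond, hclass⟩ := hs
  by_cases hab : a = b
  · have : ∀ u ∈ W, f u = g u := by
      intro u hu
      by_cases h1 : f u = a
      · rcases (hclass u hu).mpr (Or.inl h1) with h | h
        · rw [h, h1]
        · rw [h, ← hab, h1]
      · exact (hcond u hu h1 (hab ▸ h1)).symm
    rw [MON_congr G K W f g _ hg this, sub_self]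
    exact zero_mem _
  · -- the real case
    have hrest : ∀ c : Fin k, c ≠ a → c ≠ b →
        cls G W f hf c = cls G W g hg c := by
      intro c hca hcb
      apply Subtype.ext
      apply Finset.ext
      intro v
      simp only [cls, Finset.mem_filter]
      constructor
      · rintro ⟨hv, hfc⟩
        have h1 : f v ≠ a := by rw [hfc]; exact hca
        have h2 : f v ≠ b := by rw [hfc]; exact hcb
        exact ⟨hv, (hcond v hv h1 h2).trans hfc⟩
      · rintro ⟨hv, hgc⟩
        have hnot : ¬ (g v = a ∨ g v = b) := by
          rintro (h | h)
          · exact hca (hgc ▸ h ▸ rfl)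
          · exact hcb (hgc ▸ h ▸ rfl)
        have hnot' : ¬ (f v = a ∨ f v = b) := fun h => hnot ((hclass v hv).mpr h)
        push_neg at hnot'
        exact ⟨hv, (hcond v hv hnot'.1 hnot'.2).symm.trans hgc⟩
    have hdisj : ∀ (h : Fin d → Fin k) (hh : Proper G W h),
        Disjoint (cls G W h hh a).1 (cls G W h hh b).1 := by
      intro h hh
      rw [Finset.disjoint_left]
      intro v hv1 hv2
      simp only [cls, Finset.mem_filter] at hv1 hv2
      exact hab (hv1.2.symm.trans hv2.2)
    have hunion : (cls G W f hf a).1 ∪ (cls G W f hf b).1 =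
        (cls G W g hg a).1 ∪ (cls G W g hg b).1 := by
      apply Finset.ext
      intro v
      simp only [cls, Finset.mem_union, Finset.mem_filter]
      constructor
      · rintro (⟨hv, h⟩ | ⟨hv, h⟩)
        all_goals {
          rcases (hclass v hv).mpr (by tauto) with h' | h'
          · exact Or.inl ⟨hv, h'⟩
          · exact Or.inr ⟨hv, h'⟩ }
      · rintro (⟨hv, h⟩ | ⟨hv, h⟩)
        all_goals {
          rcases (hclass v hv).mp (by tauto) with h' | h'
          · exact Or.inl ⟨hv, h'⟩
          · exact Or.inr ⟨hv, h'⟩ }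
    have hgen : (X (cls G W f hf a) * X (cls G W f hf b) -
        X (cls G W g hg a) * X (cls G W g hg b) : MvPolynomial (StableSet G) K)
        ∈ idealJ K G := by
      apply Ideal.subset_span
      exact ⟨cls G W f hf a, cls G W f hf b, cls G W g hg a, cls G W g hg b,
        hdisj f hf, hdisj g hg, hunion, rfl⟩
    have hbmem : b ∈ Finset.univ.erase a :=
      Finset.mem_erase.mpr ⟨Ne.symm hab, Finset.mem_univ b⟩
    have e1 : MON G K W f hf = X (cls G W f hf a) * (X (cls G W f hf b) *
        ∏ c ∈ (Finset.univ.erase a).erase b, X (cls G W f hf c)) := by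
      rw [MON, ← Finset.mul_prod_erase _ _ (Finset.mem_univ a),
        ← Finset.mul_prod_erase _ _ hbmem]
    have e2 : MON G K W g hg = X (cls G W g hg a) * (X (cls G W g hg b) *
        ∏ c ∈ (Finset.univ.erase a).erase b, X (cls G W g hg c)) := by
      rw [MON, ← Finset.mul_prod_erase _ _ (Finset.mem_univ a),
        ← Finset.mul_prod_erase _ _ hbmem]
    have e3 : ∏ c ∈ (Finset.univ.erase a).erase b, X (cls G W f hf c) =
        ∏ c ∈ (Finset.univ.erase a).erase b, (X (cls G W g hg c) : MvPolynomial (StableSet G) K) := by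
      apply Finset.prod_congr rfl
      intro c hc
      rw [Finset.mem_erase, Finset.mem_erase] at hc
      rw [hrest c hc.2.1 hc.1]
    have : MON G K W f hf - MON G K W g hg =
        (X (cls G W f hf a) * X (cls G W f hf b) -
          X (cls G W g hg a) * X (cls G W g hg b)) *
          ∏ c ∈ (Finset.univ.erase a).erase b, X (cls G W g hg c) := by
      rw [e1, e2, e3]; ring
    rw [this]
    exact Ideal.mul_mem_right _ _ hgen

lemma MON_sub_equiv_mem {W : Finset (Fin d)} {f g : Fin d → Fin k}
    (he : JEquiv G W f g) (hf : Proper G W f) (hg : Proper G W g) :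
    MON G K W f hf - MON G K W g hg ∈ idealJ K G := by
  induction he with
  | refl => rw [sub_self]; exact zero_mem _
  | @tail y z hxy hyz ih =>
    have hy : Proper G W y := hyz.1
    have hz : Proper G W z := hyz.2.1
    have : MON G K W f hf - MON G K W z hz =
        (MON G K W f hf - MON G K W y hy) + (MON G K W y hy - MON G K W z hz) := by ring
    rw [this]
    exact add_mem (ih hy) (MON_sub_step_mem G K hyz)

noncomputable def uof (S : StableSet G) : Option (Fin d) →₀ ℕ :=
  (∑ i ∈ S.1, Finsupp.single (some i) 1) + Finsupp.single (none : Option (Fin d)) 1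

lemma uof_some (S : StableSet G) (x : Fin d) :
    uof G S (some x) = if x ∈ S.1 then 1 else 0 := by
  simp [uof, Finsupp.finset_sum_apply, Finsupp.single_apply, Finset.sum_ite_eq']

lemma uof_none (S : StableSet G) : uof G S none = 1 := by
  simp [uof, Finsupp.finset_sum_apply, Finsupp.single_apply]

lemma piMap_X_s19 (S : StableSet G) :
    piMap K G (X S) = monomial (uof G S) 1 := by
  rw [piMap, aeval_X, prod_X_eq, X, monomial_mul, one_mul, uof]

lemma prod_monomial {σ α R : Type*} [CommSemiring R] (s : Finset α) (u : α → (σ →₀ ℕ)) :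
    ∏ i ∈ s, (monomial (u i) (1 : R)) = monomial (∑ i ∈ s, u i) 1 := by
  classical
  induction s using Finset.induction_on with
  | empty => simp [monomial_zero']
  | @insert _ _ hna ih =>
    rw [Finset.prod_insert hna, Finset.sum_insert hna, ih, monomial_mul, one_mul]

/-- The exponent vector associated with `W`. -/
noncomputable def uW (k : ℕ) (W : Finset (Fin d)) : Option (Fin d) →₀ ℕ :=
  (∑ i ∈ W, Finsupp.single (some i) 1) + k • Finsupp.single (none : Option (Fin d)) 1

lemma uW_some (W : Finset (Fin d)) (x : Fin d) :
    uW k W (some x) = if x ∈ W then 1 else 0 := by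
  simp [uW, Finsupp.finset_sum_apply, Finsupp.single_apply, Finset.sum_ite_eq']

lemma uW_none (W : Finset (Fin d)) : uW k W none = k := by
  simp [uW, Finsupp.finset_sum_apply, Finsupp.single_apply]

lemma uW_inj {W W' : Finset (Fin d)} (h : uW (d := d) k W = uW k W') : W = W' := by
  apply Finset.ext
  intro x
  have := DFunLike.congr_fun h (some x)
  rw [uW_some, uW_some] at this
  by_cases h1 : x ∈ W <;> by_cases h2 : x ∈ W' <;> simp_all

lemma piMap_MON (W : Finset (Fin d)) (f : Fin d → Fin k) (hf : Proper G W f) :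
    piMap K G (MON G K W f hf) = monomial (uW k W) 1 := by
  rw [MON, map_prod]
  have e1 : ∀ c : Fin k, piMap K G (X (cls G W f hf c)) =
      monomial (uof G (cls G W f hf c)) 1 := fun c => piMap_X_s19 G K _
  rw [Finset.prod_congr rfl (fun c _ => e1 c), prod_monomial]
  congr 1
  have : ∀ c : Fin k, uof G (cls G W f hf c) =
      (∑ i ∈ W.filter (fun v => f v = c), Finsupp.single (some i) 1) +
        Finsupp.single (none : Option (Fin d)) 1 := fun c => rfl
  rw [Finset.sum_congr rfl (fun c _ => this c), Finset.sum_add_distrib]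
  rw [Finset.sum_fiberwise_eq_sum_filter W Finset.univ f (fun i => Finsupp.single (some i) 1)]
  rw [uW, Finset.filter_true_of_mem (fun i _ => Finset.mem_univ (f i)), Finset.sum_const,
    Finset.card_univ, Fintype.card_fin]

noncomputable def phiW (k : ℕ) (W : Finset (Fin d)) :
    MvPolynomial (StableSet G) K →ₗ[K] K :=
  (lcoeff K (uW k W)).comp (piMap K G).toLinearMap

lemma phiW_apply (W : Finset (Fin d)) (p : MvPolynomial (StableSet G) K) :
    phiW G K k W p = coeff (uW k W) (piMap K G p) := by
  simp [phiW, lcoeff_apply]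

lemma phiW_MON (W W' : Finset (Fin d)) (f : Fin d → Fin k) (hf : Proper G W' f) :
    phiW G K k W (MON G K W' f hf) = if W' = W then 1 else 0 := by
  rw [phiW_apply, piMap_MON, coeff_monomial]
  by_cases h : W' = W
  · rw [if_pos h, if_pos (by rw [h])]
  · rw [if_neg h, if_neg (fun he => h (uW_inj he))]

lemma uof_pair_eq {S₁ S₂ S₃ S₄ : StableSet G} (h12 : Disjoint S₁.1 S₂.1)
    (h34 : Disjoint S₃.1 S₄.1) (hu : S₁.1 ∪ S₂.1 = S₃.1 ∪ S₄.1) :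
    uof G S₁ + uof G S₂ = uof G S₃ + uof G S₄ := by
  apply Finsupp.ext
  intro x
  match x with
  | none => simp [Finsupp.add_apply, uof_none]
  | some x =>
    simp only [Finsupp.add_apply, uof_some]
    have hiff : (x ∈ S₁.1 ∨ x ∈ S₂.1) ↔ (x ∈ S₃.1 ∨ x ∈ S₄.1) := by
      rw [← Finset.mem_union, ← Finset.mem_union, hu]
    have hd12 : x ∈ S₁.1 → x ∉ S₂.1 := fun h => Finset.disjoint_left.mp h12 h
    have hd34 : x ∈ S₃.1 → x ∉ S₄.1 := fun h => Finset.disjoint_left.mp h34 h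
    split_ifs <;> first | omega | (exfalso; tauto)

lemma piMap_idealJ {x : MvPolynomial (StableSet G) K} (hx : x ∈ idealJ K G) :
    piMap K G x = 0 := by
  have hle : idealJ K G ≤ RingHom.ker (piMap K G).toRingHom := by
    rw [idealJ, Ideal.span_le]
    rintro p ⟨S₁, S₂, S₃, S₄, h12, h34, hu, rfl⟩
    have : piMap K G (X S₁ * X S₂ - X S₃ * X S₄) = 0 := by
      rw [map_sub, map_mul, map_mul, piMap_X_s19, piMap_X_s19, piMap_X_s19, piMap_X_s19,
        monomial_mul, monomial_mul, uof_pair_eq G h12 h34 hu, sub_self]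
    exact this
  exact hle hx

lemma phiW_idealM (W : Finset (Fin d)) {x : MvPolynomial (StableSet G) K}
    (hx : x ∈ idealM K G) : phiW G K k W x = 0 := by
  have key : ∀ x ∈ idealM K G, ∀ r : MvPolynomial (StableSet G) K,
      phiW G K k W (r * x) = 0 := by
    intro x hx
    refine Submodule.span_induction ?_ ?_ ?_ ?_ hx
    · rintro p ⟨S, T, hST, rfl⟩ r
      rw [phiW_apply, map_mul, map_mul, piMap_X_s19, piMap_X_s19, monomial_mul,
        mul_one, coeff_mul_monomial']
      rw [if_neg]
      intro hle
      obtain ⟨i, hi⟩ := hST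
      rw [Finset.mem_inter] at hi
      obtain ⟨hiS, hiT⟩ := hi
      have h2 : (uof G S + uof G T) (some i) = 2 := by
        rw [Finsupp.add_apply, uof_some, uof_some, if_pos hiS, if_pos hiT]
      have := hle (some i)
      rw [h2, uW_some] at this
      split_ifs at this <;> omega
    · intro r
      rw [mul_zero, map_zero]
    · intro a b _ _ ha hb r
      rw [mul_add, map_add, ha r, hb r, add_zero]
    · intro a b _ hb r
      rw [smul_eq_mul, ← mul_assoc]
      exact hb (r * a)
  have := key x hx 1
  rwa [one_mul] at this

lemma phiW_kempe (W : Finset (Fin d)) {x : MvPolynomial (StableSet G) K}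
    (hx : x ∈ kempeIdeal K G) : phiW G K k W x = 0 := by
  rw [kempeIdeal, Submodule.add_eq_sup] at hx
  obtain ⟨y, hy, z, hz, rfl⟩ := Submodule.mem_sup.mp hx
  rw [map_add, phiW_idealM G K W hz, add_zero, phiW_apply, piMap_idealJ G K hy, coeff_zero]

lemma monomial_mem_idealM {a : StableSet G →₀ ℕ} {S T : StableSet G}
    (hS : S ∈ a.support) (hT : T ∈ a.support) (hST : (S.1 ∩ T.1).Nonempty)
    (hne : S ≠ T ∨ 2 ≤ a S) :
    (monomial a (1 : K)) ∈ idealM K G := by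
  have haS : 1 ≤ a S := Nat.one_le_iff_ne_zero.mpr (Finsupp.mem_support_iff.mp hS)
  have haT : 1 ≤ a T := Nat.one_le_iff_ne_zero.mpr (Finsupp.mem_support_iff.mp hT)
  classical
  have hle : Finsupp.single S 1 + Finsupp.single T 1 ≤ a := by
    rw [Finsupp.le_def]
    intro U
    rw [Finsupp.add_apply, Finsupp.single_apply, Finsupp.single_apply]
    by_cases h1 : S = U <;> by_cases h2 : T = U
    · simp only [if_pos h1, if_pos h2]
      rcases hne with hne | hne
      · exact absurd (h1.trans h2.symm) hne
      · rw [← h1]; omega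
    · simp only [if_pos h1, if_neg h2]; rw [← h1]; omega
    · simp only [if_neg h1, if_pos h2]; rw [← h2]; omega
    · simp only [if_neg h1, if_neg h2]; omega
  have hsplit : a = Finsupp.single S 1 + Finsupp.single T 1 +
      (a - (Finsupp.single S 1 + Finsupp.single T 1)) :=
    (add_tsub_cancel_of_le hle).symm
  have : (monomial a (1 : K)) = X S * X T *
      monomial (a - (Finsupp.single S 1 + Finsupp.single T 1)) 1 := by
    rw [X, X, monomial_mul, monomial_mul, one_mul, one_mul, ← hsplit]
  rw [this]
  exact Ideal.mul_mem_right _ _ (Ideal.subset_span ⟨S, T, hST, rfl⟩)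

lemma good_monomial_eq_MON (hk0 : 0 < k) {a : StableSet G →₀ ℕ}
    (hsum : (a.sum fun _ n => n) = k)
    (hgood : ∀ S ∈ a.support, ∀ T ∈ a.support, (S.1 ∩ T.1).Nonempty → S = T ∧ a S ≤ 1) :
    ∃ (W : Finset (Fin d)) (f : Fin d → Fin k) (hf : Proper G W f),
      monomial a (1 : K) = MON G K W f hf := by
  classical
  set supp' : Finset (StableSet G) := a.support.erase (emptyStable G) with hsupp'
  set n := supp'.card with hn
  -- every element of supp' has coefficient one
  have hone : ∀ S ∈ supp', a S = 1 := by
    intro S hS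
    have hS' : S ∈ a.support := Finset.mem_of_mem_erase hS
    have hSne : S.1.Nonempty := by
      rcases Finset.eq_empty_or_nonempty S.1 with h | h
      · exact absurd (Subtype.ext h : S = emptyStable G) (Finset.mem_erase.mp hS).1
      · exact h
    have := (hgood S hS' S hS' (by rwa [Finset.inter_self])).2
    have := Nat.one_le_iff_ne_zero.mpr (Finsupp.mem_support_iff.mp hS')
    omega
  have hsum' : ∑ S ∈ supp', a S = n := by
    rw [Finset.sum_congr rfl hone, Finset.sum_const, smul_eq_mul, mul_one, hn]
  have hcard : a (emptyStable G) + n = k := by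
    rw [← hsum]
    unfold Finsupp.sum
    by_cases h0 : emptyStable G ∈ a.support
    · rw [← Finset.add_sum_erase _ _ h0, ← hsupp', hsum']
    · rw [Finsupp.notMem_support_iff.mp h0, zero_add, ← hsum']
      exact Finset.sum_congr (by rw [hsupp', Finset.erase_eq_of_notMem h0]) (fun _ _ => rfl)
  have hcard' : n ≤ k := by omega
  set e : {x // x ∈ supp'} ≃ Fin n := Fintype.equivFinOfCardEq (Fintype.card_coe supp') with he
  -- uniqueness of the part containing a vertex
  have huniq : ∀ S ∈ supp', ∀ T ∈ supp', ∀ v : Fin d, v ∈ S.1 → v ∈ T.1 → S = T := by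
    intro S hS T hT v hvS hvT
    exact (hgood S (Finset.mem_of_mem_erase hS) T (Finset.mem_of_mem_erase hT)
      ⟨v, Finset.mem_inter.mpr ⟨hvS, hvT⟩⟩).1
  set W : Finset (Fin d) := a.support.biUnion (fun S => S.1) with hW
  set f : Fin d → Fin k := fun v =>
    if h : ∃ S : StableSet G, S ∈ supp' ∧ v ∈ S.1 then
      Fin.castLE hcard' (e ⟨h.choose, h.choose_spec.1⟩) else ⟨0, hk0⟩ with hf
  have fval : ∀ (S : StableSet G) (hS : S ∈ supp'), ∀ v ∈ S.1,
      f v = Fin.castLE hcard' (e ⟨S, hS⟩) := by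
    intro S hS v hv
    have hex : ∃ T : StableSet G, T ∈ supp' ∧ v ∈ T.1 := ⟨S, hS, hv⟩
    have h2 : (⟨hex.choose, hex.choose_spec.1⟩ : {x // x ∈ supp'}) = ⟨S, hS⟩ :=
      Subtype.ext (huniq hex.choose hex.choose_spec.1 S hS v hex.choose_spec.2 hv)
    rw [hf]
    simp only [dif_pos hex]
    exact congrArg _ (congrArg _ h2)
  have hWmem : ∀ v ∈ W, ∃ S, ∃ hS : S ∈ supp', v ∈ S.1 := by
    intro v hv
    obtain ⟨S, hS, hvS⟩ := Finset.mem_biUnion.mp hv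
    have : S ≠ emptyStable G := by
      intro h
      rw [h] at hvS
      exact absurd hvS (Finset.notMem_empty v)
    exact ⟨S, Finset.mem_erase.mpr ⟨this, hS⟩, hvS⟩
  have hmemW : ∀ S ∈ supp', ∀ v ∈ S.1, v ∈ W := by
    intro S hS v hv
    exact Finset.mem_biUnion.mpr ⟨S, Finset.mem_of_mem_erase hS, hv⟩
  have hprop : Proper G W f := by
    intro u hu w hw hadj heq
    obtain ⟨Su, hSu, hvSu⟩ := hWmem u hu
    obtain ⟨Sw, hSw, hvSw⟩ := hWmem w hw
    rw [fval Su hSu u hvSu, fval Sw hSw w hvSw] at heq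
    have := Fin.castLE_injective hcard' heq
    have := e.injective this
    have hSuw : Su = Sw := Subtype.ext_iff.mp this
    exact Su.2 hvSu (hSuw ▸ hvSw) hadj
  refine ⟨W, f, hprop, ?_⟩
  -- now the monomial identity
  set j : Fin n → Fin k := Fin.castLE hcard' with hj
  have hjinj : Function.Injective j := Fin.castLE_injective hcard'
  set img : Finset (Fin k) := Finset.univ.image j with himg
  have himgcard : img.card = n := by
    rw [himg, Finset.card_image_of_injective _ hjinj, Finset.card_univ, Fintype.card_fin]
  have claim1 : ∀ i : Fin n, cls G W f hprop (j i) = ((e.symm i : {x // x ∈ supp'}) : StableSet G) := by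
    intro i
    apply Subtype.ext
    apply Finset.ext
    intro v
    simp only [cls, Finset.mem_filter]
    constructor
    · rintro ⟨hv, hfv⟩
      obtain ⟨S, hS, hvS⟩ := hWmem v hv
      rw [fval S hS v hvS] at hfv
      have : e ⟨S, hS⟩ = i := hjinj hfv
      have : (⟨S, hS⟩ : {x // x ∈ supp'}) = e.symm i := by
        rw [← this, Equiv.symm_apply_apply]
      rw [← this]
      exact hvS
    · intro hv
      have hS := (e.symm i).2
      refine ⟨hmemW _ hS v hv, ?_⟩
      rw [fval _ hS v hv]
      congr 1
      have heq : (⟨((e.symm i : {x // x ∈ supp'}) : StableSet G), hS⟩ : {x // x ∈ supp'}) =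
          e.symm i := Subtype.ext rfl
      rw [heq, Equiv.apply_symm_apply]
  have claim2 : ∀ c : Fin k, c ∉ img → cls G W f hprop c = emptyStable G := by
    intro c hc
    apply Subtype.ext
    simp only [cls, emptyStable]
    rw [Finset.filter_eq_empty_iff]
    intro v hv
    obtain ⟨S, hS, hvS⟩ := hWmem v hv
    rw [fval S hS v hvS]
    intro h
    exact hc (h ▸ Finset.mem_image.mpr ⟨e ⟨S, hS⟩, Finset.mem_univ _, rfl⟩)
  have eMON : MON G K W f hprop =
      (∏ S ∈ supp', X S) * X (emptyStable G) ^ (k - n) := by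
    rw [MON, ← Finset.prod_mul_prod_compl img (fun c => X (cls G W f hprop c))]
    congr 1
    · rw [himg, Finset.prod_image (fun x _ y _ h => hjinj h)]
      have : ∀ i ∈ Finset.univ, (X (cls G W f hprop (j i)) : MvPolynomial (StableSet G) K) =
          X ((e.symm i : {x // x ∈ supp'}) : StableSet G) := fun i _ => by rw [claim1 i]
      rw [Finset.prod_congr rfl this]
      rw [Equiv.prod_comp e.symm (fun x : {x // x ∈ supp'} => (X (x : StableSet G) : MvPolynomial (StableSet G) K))]
      exact Finset.prod_coe_sort supp' (fun S => (X S : MvPolynomial (StableSet G) K))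
    · have : ∀ c ∈ imgᶜ, (X (cls G W f hprop c) : MvPolynomial (StableSet G) K) =
          X (emptyStable G) := by
        intro c hc
        rw [claim2 c (Finset.mem_compl.mp hc)]
      rw [Finset.prod_congr rfl this, Finset.prod_const, Finset.card_compl, himgcard,
        Fintype.card_fin]
  have emonomial : (monomial a (1 : K)) =
      (∏ S ∈ supp', X S) * X (emptyStable G) ^ (k - n) := by
    rw [monic_monomial_eq]
    unfold Finsupp.prod
    have hXone : ∀ S ∈ supp', (X S : MvPolynomial (StableSet G) K) ^ a S = X S := by
      intro S hS
      rw [hone S hS, pow_one]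
    by_cases h0 : emptyStable G ∈ a.support
    · rw [← Finset.mul_prod_erase _ _ h0, ← hsupp', Finset.prod_congr rfl hXone, mul_comm]
      congr 2
      omega
    · rw [Finsupp.notMem_support_iff.mp h0] at hcard
      have : a.support = supp' := (Finset.erase_eq_of_notMem h0).symm
      rw [this, Finset.prod_congr rfl hXone]
      have : k - n = 0 := by omega
      rw [this, pow_zero, mul_one]
  rw [eMON, emonomial]

lemma idealJ_le_kempe : idealJ K G ≤ kempeIdeal K G := by
  rw [kempeIdeal, Submodule.add_eq_sup]
  exact le_sup_left

lemma idealM_le_kempe : idealM K G ≤ kempeIdeal K G := by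
  rw [kempeIdeal, Submodule.add_eq_sup]
  exact le_sup_right

end Alg

theorem hilbertFn_kempeIdeal_eventually_const {d : ℕ} (G : SimpleGraph (Fin d))
    [DecidableRel G.Adj] (K : Type) [Field K] :
    ∀ k : ℕ, G.maxDegree + 1 ≤ k → hilbertFn K G (kempeIdeal K G) k = 2 ^ d := by
  intro k hk
  have hk' : G.maxDegree < k := hk
  have hk0 : 0 < k := Nat.lt_of_le_of_lt (Nat.zero_le _) hk'
  obtain ⟨f₀, hf₀⟩ := exists_proper G hk'
  set q := Ideal.Quotient.mkₐ K (kempeIdeal K G) with hq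
  set B : Finset (Fin d) → (MvPolynomial (StableSet G) K ⧸ kempeIdeal K G) :=
    fun W => q (MON G K W f₀ (Proper.mono G (Finset.subset_univ W) hf₀)) with hB
  -- the image of the degree-k component is spanned by the B W
  have hqm : ∀ p, q.toLinearMap p = q p := fun p => rfl
  have hspan : Submodule.map q.toLinearMap (homogeneousSubmodule (StableSet G) K k) =
      Submodule.span K (Set.range B) := by
    apply le_antisymm
    · rintro x hx
      obtain ⟨p, hp, rfl⟩ := Submodule.mem_map.mp hx
      rw [mem_homogeneousSubmodule] at hp
      have key : ∀ a ∈ p.support, q (monomial a (1 : K)) ∈ Submodule.span K (Set.range B) := by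
        intro a ha
        have hdeg : (a.sum fun _ n => n) = k := by
          have h1 := hp (Finsupp.mem_support_iff.mp ha)
          rw [show ((Finsupp.weight 1) a : ℕ) = Finsupp.degree a by
            rw [Finsupp.degree_eq_weight_one]; rfl] at h1
          rw [← h1, Finsupp.degree, Finsupp.sum]; rfl
        by_cases hbad : ∃ S ∈ a.support, ∃ T ∈ a.support,
            (S.1 ∩ T.1).Nonempty ∧ (S ≠ T ∨ 2 ≤ a S)
        · obtain ⟨S, hS, T, hT, hST, hcase⟩ := hbad
          have : monomial a (1 : K) ∈ kempeIdeal K G :=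
            idealM_le_kempe G K (monomial_mem_idealM G K hS hT hST hcase)
          rw [hq, Ideal.Quotient.mkₐ_eq_mk, Ideal.Quotient.eq_zero_iff_mem.mpr this]
          exact zero_mem _
        · push_neg at hbad
          have hgood : ∀ S ∈ a.support, ∀ T ∈ a.support,
              (S.1 ∩ T.1).Nonempty → S = T ∧ a S ≤ 1 := by
            intro S hS T hT hST
            obtain ⟨h1, h2⟩ := hbad S hS T hT hST
            exact ⟨h1, by omega⟩
          obtain ⟨W, f, hf, heq⟩ := good_monomial_eq_MON G K hk0 hdeg hgood
          have hequiv : JEquiv G W f f₀ :=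
            main_equiv G hk' W f f₀ hf (Proper.mono G (Finset.subset_univ W) hf₀)
          have hmem : MON G K W f hf -
              MON G K W f₀ (Proper.mono G (Finset.subset_univ W) hf₀) ∈ kempeIdeal K G :=
            idealJ_le_kempe G K (MON_sub_equiv_mem G K hequiv hf _)
          have : q (MON G K W f hf) = B W := by
            rw [hB, hq, Ideal.Quotient.mkₐ_eq_mk, Ideal.Quotient.eq]
            exact hmem
          rw [heq, this]
          exact Submodule.subset_span ⟨W, rfl⟩
      have hexp : q.toLinearMap p = ∑ a ∈ p.support, (coeff a p) • q (monomial a 1) := by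
        rw [hqm]
        conv_lhs => rw [as_sum p]
        rw [map_sum]
        apply Finset.sum_congr rfl
        intro a _
        rw [← map_smul, smul_monomial, smul_eq_mul, mul_one]
      rw [hexp]
      exact Submodule.sum_mem _ (fun a ha => Submodule.smul_mem _ _ (key a ha))
    · rw [Submodule.span_le]
      rintro x ⟨W, rfl⟩
      exact Submodule.mem_map_of_mem (MON_homog G K W f₀ _)
  have hli : LinearIndependent K B := by
    rw [Fintype.linearIndependent_iff]
    intro g hg W₀
    have hqsum : q (∑ W : Finset (Fin d),
        g W • MON G K W f₀ (Proper.mono G (Finset.subset_univ W) hf₀)) = 0 := by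
      rw [map_sum, Finset.sum_congr rfl (fun W _ => map_smul q (g W)
        (MON G K W f₀ (Proper.mono G (Finset.subset_univ W) hf₀)))]
      exact hg
    have hmem : (∑ W : Finset (Fin d),
        g W • MON G K W f₀ (Proper.mono G (Finset.subset_univ W) hf₀)) ∈ kempeIdeal K G := by
      rw [← Ideal.Quotient.eq_zero_iff_mem]
      rw [hq, Ideal.Quotient.mkₐ_eq_mk] at hqsum
      exact hqsum
    have := phiW_kempe G K (k := k) W₀ hmem
    rw [map_sum] at this
    have e2 : ∀ W : Finset (Fin d), phiW G K k W₀
        (g W • MON G K W f₀ (Proper.mono G (Finset.subset_univ W) hf₀)) =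
        if W = W₀ then g W else 0 := by
      intro W
      rw [map_smul, phiW_MON, smul_eq_mul]
      split_ifs <;> simp
    rw [Finset.sum_congr rfl (fun W _ => e2 W)] at this
    rw [Finset.sum_ite_eq' Finset.univ W₀ g, if_pos (Finset.mem_univ _)] at this
    exact this
  rw [hilbertFn, hspan, finrank_span_eq_card hli, Fintype.card_finset, Fintype.card_fin]
end
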